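/- arXiv:2003.07582 — 7 statements merged into one kernel-verified Lean document; each statement's English description precedes it below -/
import Mathlib

section
/- Let κ be a regular uncountable cardinal and ⟨C_α | α<κ⟩ a C-sequence over κ. For every pair (α,β)∈[κ]² with α>0: (1) λ(last(α,β),β)<α (using the convention λ(δ,δ)=0); (2) if last(α,β)≠α, then α∈acc(C_{last(α,β)}); (3) tr(last(α,β),β) is an initial segment of tr(α,β). -/
namespace Paper

open Cardinal Set

/-- `α` is an accumulation point of `C`: `sup(C ∩ α) = α > 0`. -/
def IsAccPt (C : Set Ordinal) (α : Ordinal) : Prop :=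
  0 < α ∧ ∀ β < α, ∃ γ ∈ C, β < γ ∧ γ < α

/-- `C` is a club in `δ`: a closed and unbounded subset of `δ`. -/
def IsClubIn (C : Set Ordinal) (δ : Ordinal) : Prop :=
  C ⊆ Set.Iio δ ∧ (∀ α < δ, IsAccPt C α → α ∈ C) ∧ ∀ β < δ, ∃ γ ∈ C, β < γ

/-- `S` is stationary in `δ`: it meets every club in `δ`. -/
def IsStationaryIn (S : Set Ordinal) (δ : Ordinal) : Prop :=
  ∀ C, IsClubIn C δ → (S ∩ C).Nonempty

/-- `X` has cardinality `κ`. -/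
def HasSize {α : Type 1} (X : Set α) (κ : Cardinal.{0}) : Prop :=
  #X = Cardinal.lift.{1} κ

/-- A `C`-sequence over `κ`: each `C α` is a closed subset of `α` with `sup(C α) = sup(α)`. -/
def IsCSeq (κ : Ordinal) (C : Ordinal → Set Ordinal) : Prop :=
  ∀ α < κ, C α ⊆ Set.Iio α ∧ (∀ β < α, IsAccPt (C α) β → β ∈ C α) ∧
    sSup (C α) = sSup (Set.Iio α)

/-- The trace function `Tr(α,β) : ω → κ` of walks along `C`. -/
noncomputable def Trn (C : Ordinal → Set Ordinal) (α β : Ordinal) : ℕ → Ordinal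
  | 0 => β
  | n + 1 => if α < Trn C α β n then sInf (C (Trn C α β n) \ Set.Iio α) else α

/-- `ρ₂(α,β)`: the length of the walk from `β` down to `α`. -/
noncomputable def rho2 (C : Ordinal → Set Ordinal) (α β : Ordinal) : ℕ :=
  sInf {n : ℕ | Trn C α β n = α}

/-- The image of `tr(α,β) = Tr(α,β) ↾ ρ₂(α,β)`. -/
noncomputable def trIm (C : Ordinal → Set Ordinal) (α β : Ordinal) : Set Ordinal :=
  {x | ∃ i < rho2 C α β, Trn C α β i = x}

/-- `λ(α,β) = max { sup(C_{Tr(α,β)(i)} ∩ α) | i < ρ₂(α,β) }`, with the convention `λ(δ,δ) = 0`. -/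
noncomputable def lamb (C : Ordinal → Set Ordinal) (α β : Ordinal) : Ordinal :=
  (Finset.range (rho2 C α β)).sup fun i => sSup (C (Trn C α β i) ∩ Set.Iio α)

/-- `last(α,β)` of Definition 2.9. -/
noncomputable def lastStep (C : Ordinal → Set Ordinal) (α β : Ordinal) : Ordinal :=
  if lamb C α β < α then α else sInf (trIm C α β)

variable {κ : Ordinal} {C : Ordinal → Set Ordinal}

lemma exists_ge (hC : IsCSeq κ C) {α δ : Ordinal} (hα : 0 < α) (hαδ : α < δ)
    (hδ : δ < κ) : ∃ γ ∈ C δ, α ≤ γ := by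
  obtain ⟨hsub, hcl, hsup⟩ := hC δ hδ
  by_cases hmem : α ∈ C δ
  · exact ⟨α, hmem, le_rfl⟩
  have hle : α ≤ sSup (C δ) := by
    rw [hsup]; exact le_csSup bddAbove_Iio hαδ
  have hne : (C δ).Nonempty := by
    rw [Set.nonempty_iff_ne_empty]
    intro he
    rw [he, csSup_empty] at hle
    exact hα.not_ge (le_bot_iff.1 hle ▸ le_rfl)
  rcases hle.lt_or_eq with h | h
  · obtain ⟨γ, hγ, hαγ⟩ := exists_lt_of_lt_csSup hne h
    exact ⟨γ, hγ, hαγ.le⟩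
  · have hacc : IsAccPt (C δ) α := by
      refine ⟨hα, fun b hb => ?_⟩
      obtain ⟨γ, hγ, hbγ⟩ := exists_lt_of_lt_csSup hne (h ▸ hb)
      have hγα : γ ≤ α := h ▸ le_csSup (bddAbove_Iio.mono hsub) hγ
      exact ⟨γ, hγ, hbγ, lt_of_le_of_ne hγα (fun e => hmem (e ▸ hγ))⟩
    exact absurd (hcl α hαδ hacc) hmem

lemma step (hC : IsCSeq κ C) {α δ : Ordinal} (hα : 0 < α) (hαδ : α < δ) (hδ : δ < κ) :
    sInf (C δ \ Set.Iio α) ∈ C δ ∧ α ≤ sInf (C δ \ Set.Iio α) ∧ sInf (C δ \ Set.Iio α) < δ := by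
  obtain ⟨γ, hγ, hαγ⟩ := exists_ge hC hα hαδ hδ
  have hne : (C δ \ Set.Iio α).Nonempty := ⟨γ, hγ, not_lt.2 hαγ⟩
  have hmem := csInf_mem hne
  exact ⟨hmem.1, not_lt.1 hmem.2, (hC δ hδ).1 hmem.1⟩

lemma trn_succ (C : Ordinal → Set Ordinal) (α β : Ordinal) (n : ℕ) :
    Trn C α β (n + 1) = if α < Trn C α β n then sInf (C (Trn C α β n) \ Set.Iio α) else α := rfl

lemma trn_bounds (hC : IsCSeq κ C) {α β : Ordinal} (hα : 0 < α) (hαβ : α ≤ β) (hβ : β < κ) :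
    ∀ n, α ≤ Trn C α β n ∧ Trn C α β n < κ := by
  intro n
  induction n with
  | zero => exact ⟨hαβ, hβ⟩
  | succ n ih =>
    by_cases h : α < Trn C α β n
    · have hst := step hC hα h ih.2
      rw [trn_succ, if_pos h]
      exact ⟨hst.2.1, hst.2.2.trans ih.2⟩
    · rw [trn_succ, if_neg h]
      exact ⟨le_rfl, lt_of_le_of_lt hαβ hβ⟩

lemma trn_dec (hC : IsCSeq κ C) {α β : Ordinal} (hα : 0 < α) (hαβ : α ≤ β) (hβ : β < κ)
    {n : ℕ} (h : α < Trn C α β n) : Trn C α β (n + 1) < Trn C α β n := by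
  rw [trn_succ, if_pos h]
  exact (step hC hα h (trn_bounds hC hα hαβ hβ n).2).2.2

lemma trn_hits (hC : IsCSeq κ C) {α β : Ordinal} (hα : 0 < α) (hαβ : α ≤ β) (hβ : β < κ) :
    ∃ n, Trn C α β n = α := by
  by_contra h
  push_neg at h
  have hlt : ∀ n, α < Trn C α β n := fun n =>
    lt_of_le_of_ne (trn_bounds hC hα hαβ hβ n).1 (Ne.symm (h n))
  obtain ⟨n, hn⟩ := csInf_mem (Set.range_nonempty (Trn C α β))
  exact absurd (csInf_le (OrderBot.bddBelow _) (Set.mem_range_self (n + 1)))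
    (not_le.2 (hn ▸ trn_dec hC hα hαβ hβ (hlt n)))

lemma crux (hC : IsCSeq κ C) {α δ : Ordinal} (hα : 0 < α) (hαδ : α < δ) (hδ : δ < κ)
    (hsup : sSup (C δ ∩ Set.Iio α) = α) :
    α ∈ C δ ∧ IsAccPt (C δ) α ∧ sInf (C δ \ Set.Iio α) = α := by
  have hne : (C δ ∩ Set.Iio α).Nonempty := by
    rw [Set.nonempty_iff_ne_empty]
    intro he
    rw [he, csSup_empty] at hsup
    exact hα.ne (hsup ▸ rfl)
  have hacc : IsAccPt (C δ) α := by
    refine ⟨hα, fun b hb => ?_⟩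
    obtain ⟨γ, hγ, hbγ⟩ := exists_lt_of_lt_csSup hne (hsup ▸ hb)
    exact ⟨γ, hγ.1, hbγ, hγ.2⟩
  have hmem : α ∈ C δ := (hC δ hδ).2.1 α hαδ hacc
  refine ⟨hmem, hacc, le_antisymm (csInf_le (OrderBot.bddBelow _) ⟨hmem, fun h => absurd h (lt_irrefl α)⟩)
    (le_csInf ⟨α, hmem, fun h => absurd h (lt_irrefl α)⟩ fun x hx => not_lt.1 hx.2)⟩


/-- Lemma 2.10: for every `(α,β) ∈ [κ]²` with `α > 0`:
(1) `λ(last(α,β), β) < α`;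
(2) if `last(α,β) ≠ α` then `α ∈ acc(C_{last(α,β)})`;
(3) `tr(last(α,β), β)` is an initial segment of `tr(α,β)`. -/
theorem stmt6 (κ : Cardinal) (hreg : κ.IsRegular) (hunc : ℵ₀ < κ)
    (C : Ordinal → Set Ordinal) (hC : IsCSeq κ.ord C) :
    ∀ α β : Ordinal, 0 < α → α < β → β < κ.ord →
      lamb C (lastStep C α β) β < α ∧
      (lastStep C α β ≠ α →
        α ∈ C (lastStep C α β) ∧ IsAccPt (C (lastStep C α β)) α) ∧
      (rho2 C (lastStep C α β) β ≤ rho2 C α β ∧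
        ∀ i < rho2 C (lastStep C α β) β, Trn C (lastStep C α β) β i = Trn C α β i) := by
  intro α β hα hαβ hβ
  have hhits : ∃ n, Trn C α β n = α := trn_hits hC hα hαβ.le hβ
  have hρmem : Trn C α β (rho2 C α β) = α := Nat.sInf_mem hhits
  have hlt : ∀ j < rho2 C α β, α < Trn C α β j := fun j hj =>
    lt_of_le_of_ne (trn_bounds hC hα hαβ.le hβ j).1 (Ne.symm (Nat.notMem_of_lt_sInf hj))
  have hκn : ∀ n, Trn C α β n < κ.ord := fun n => (trn_bounds hC hα hαβ.le hβ n).2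
  have hanti : ∀ k, k ≤ rho2 C α β → ∀ j, j ≤ k → Trn C α β k ≤ Trn C α β j := by
    intro k
    induction k with
    | zero => intro _ j hj; rw [Nat.le_zero.1 hj]
    | succ k ih =>
      intro hk j hj
      rcases Nat.eq_or_lt_of_le hj with he | hlt'
      · rw [he]
      · exact le_trans (trn_dec hC hα hαβ.le hβ (hlt k (Nat.lt_of_succ_le hk))).le
          (ih (Nat.le_of_succ_le hk) j (Nat.lt_succ_iff.1 hlt'))
  have hstrict : ∀ j k, j < k → k ≤ rho2 C α β → Trn C α β k < Trn C α β j := fun j k hjk hk =>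
    lt_of_le_of_lt (hanti k hk (j + 1) hjk)
      (trn_dec hC hα hαβ.le hβ (hlt j (lt_of_lt_of_le hjk hk)))
  have hlamb_le : lamb C α β ≤ α := Finset.sup_le fun j _ => csSup_le' fun x hx => hx.2.le
  by_cases hcase : lamb C α β < α
  · have hlast : lastStep C α β = α := if_pos hcase
    rw [hlast]
    exact ⟨hcase, fun h => absurd rfl h, le_rfl, fun i _ => rfl⟩
  · have hlam : lamb C α β = α := le_antisymm hlamb_le (not_lt.1 hcase)
    have hρpos : 0 < rho2 C α β := Nat.pos_of_ne_zero fun h => hαβ.ne' (by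
      have h2 := hρmem; rw [h] at h2; exact h2)
    obtain ⟨i, himem, hisup⟩ := Finset.exists_mem_eq_sup (Finset.range (rho2 C α β))
      ⟨0, Finset.mem_range.2 hρpos⟩ (fun j => sSup (C (Trn C α β j) ∩ Set.Iio α))
    have hi : i < rho2 C α β := Finset.mem_range.1 himem
    have hsup_i : sSup (C (Trn C α β i) ∩ Set.Iio α) = α := by rw [← hisup]; exact hlam
    have hηα : α < Trn C α β i := hlt i hi
    have hcx := crux hC hα hηα (hκn i) hsup_i
    have hnext : Trn C α β (i + 1) = α := by rw [trn_succ, if_pos hηα]; exact hcx.2.2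
    have hρeq : rho2 C α β = i + 1 := le_antisymm (Nat.sInf_le hnext) (Nat.succ_le_of_lt hi)
    have hmin : sInf (trIm C α β) = Trn C α β i := by
      have htr : Trn C α β i ∈ trIm C α β := ⟨i, hi, rfl⟩
      apply le_antisymm (csInf_le (OrderBot.bddBelow _) htr)
      refine le_csInf ⟨_, htr⟩ ?_
      rintro x ⟨j, hj, rfl⟩
      exact hanti i hi.le j (by omega)
    have hlast : lastStep C α β = Trn C α β i := by
      have h' : lastStep C α β = sInf (trIm C α β) := if_neg hcase
      rw [h', hmin]
    have weq : ∀ j, j ≤ i → Trn C (Trn C α β i) β j = Trn C α β j := by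
      intro j
      induction j with
      | zero => intro _; rfl
      | succ j ih =>
        intro hji
        have hj_i : j < i := Nat.lt_of_succ_le hji
        have ht := ih hj_i.le
        have hjρ : j < rho2 C α β := lt_trans hj_i hi
        have hηt : Trn C α β i < Trn C α β j := hstrict j i hj_i hi.le
        have hm : Trn C α β (j + 1) = sInf (C (Trn C α β j) \ Set.Iio α) := by
          rw [trn_succ, if_pos (hlt j hjρ)]
        have hmge : Trn C α β i ≤ Trn C α β (j + 1) := hanti i hi.le (j + 1) hji
        rw [hm] at hmge
        rw [trn_succ, ht, if_pos hηt, hm]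
        have hmemC : sInf (C (Trn C α β j) \ Set.Iio α) ∈ C (Trn C α β j) :=
          (step hC hα (hlt j hjρ) (hκn j)).1
        apply le_antisymm
        · exact csInf_le (OrderBot.bddBelow _) ⟨hmemC, not_lt.2 hmge⟩
        · refine le_csInf ⟨_, hmemC, not_lt.2 hmge⟩ ?_
          rintro x ⟨hxC, hxη⟩
          refine csInf_le (OrderBot.bddBelow _) ⟨hxC, fun hxα => hxη (lt_trans hxα hηα)⟩
    have hρη : rho2 C (Trn C α β i) β = i := by
      have h1 : Trn C (Trn C α β i) β i = Trn C α β i := weq i le_rfl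
      apply le_antisymm (Nat.sInf_le h1)
      by_contra hcon
      push_neg at hcon
      have hr : Trn C (Trn C α β i) β (rho2 C (Trn C α β i) β) = Trn C α β i :=
        Nat.sInf_mem (s := {n : ℕ | Trn C (Trn C α β i) β n = Trn C α β i}) ⟨i, h1⟩
      exact (hstrict _ i hcon hi.le).ne' ((weq _ hcon.le).symm.trans hr)
    rw [hlast]
    refine ⟨?_, fun _ => ⟨hcx.1, hcx.2.1⟩, ?_, ?_⟩
    · have hbot : (⊥ : Ordinal) < α := Ordinal.bot_eq_zero ▸ hα
      have hl : lamb C (Trn C α β i) β = (Finset.range (rho2 C (Trn C α β i) β)).sup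
          (fun j => sSup (C (Trn C (Trn C α β i) β j) ∩ Set.Iio (Trn C α β i))) := rfl
      rw [hl, hρη]
      refine (Finset.sup_lt_iff hbot).2 ?_
      intro j hj
      have hj_i : j < i := Finset.mem_range.1 hj
      rw [weq j hj_i.le]
      have hjρ : j < rho2 C α β := lt_trans hj_i hi
      have hset : C (Trn C α β j) ∩ Set.Iio (Trn C α β i) = C (Trn C α β j) ∩ Set.Iio α := by
        ext x
        constructor
        · rintro ⟨hxC, hxη⟩
          refine ⟨hxC, ?_⟩
          by_contra hxα
          have hm : Trn C α β (j + 1) = sInf (C (Trn C α β j) \ Set.Iio α) := by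
            rw [trn_succ, if_pos (hlt j hjρ)]
          have h1 : Trn C α β (j + 1) ≤ x := hm ▸ csInf_le (OrderBot.bddBelow _) ⟨hxC, hxα⟩
          have h2 : Trn C α β i ≤ Trn C α β (j + 1) := hanti i hi.le (j + 1) hj_i
          exact (not_lt.2 (h2.trans h1)) hxη
        · rintro ⟨hxC, hxα⟩; exact ⟨hxC, lt_trans hxα hηα⟩
      rw [hset]
      refine lt_of_le_of_ne (csSup_le' fun x hx => hx.2.le) ?_
      intro heq
      have hc := (crux hC hα (hlt j hjρ) (hκn j) heq).2.2
      have hnext' : Trn C α β (j + 1) = α := by rw [trn_succ, if_pos (hlt j hjρ)]; exact hc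
      exact (hlt (j + 1) (hρeq ▸ Nat.succ_lt_succ hj_i)).ne' hnext'
    · rw [hρη]; exact hi.le
    · intro j hj
      rw [hρη] at hj
      exact weq j hj.le


end Paper
end

section
/- Let κ be a regular uncountable cardinal. If Pl1(κ,1,2) holds, then there exists a function s:[κ]²→κ satisfying: (1) for every pair (α,β)∈[κ]² with β a limit ordinal, α<s(α,β)<β; (2) for every cofinal A⊆κ, the image s"[A]² is stationary in κ. -/
namespace Paper

open Cardinal Set

/-- `Pl₁(κ, θ, χ)` of Definition 1.3 (the triple version). -/
def Pl1 (κ θ χ : Cardinal) : Prop :=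
  ∃ t : Ordinal → Ordinal → Ordinal × Ordinal × Ordinal,
    (∀ α β : Ordinal, α < β → β < κ.ord →
      (t α β).1 ≤ (t α β).2.1 ∧ (t α β).2.1 ≤ α ∧ α < (t α β).2.2 ∧ (t α β).2.2 ≤ β) ∧
    ∀ σ : Ordinal, σ < χ.ord →
      ∀ 𝒜 : Set (Set Ordinal),
        (∀ a ∈ 𝒜, a ⊆ Set.Iio κ.ord ∧ Nonempty (↥(Set.Iio σ) ≃o ↥a)) →
        𝒜.PairwiseDisjoint id →
        HasSize 𝒜 κ →
        ∃ S ⊆ Set.Iio κ.ord, IsStationaryIn S κ.ord ∧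
          ∀ α' ∈ S, ∀ β' ∈ S, α' < β' →
            ∀ τ : Ordinal, τ < min θ.ord α' →
              ∃ a ∈ 𝒜, ∃ b ∈ 𝒜, (∀ x ∈ a, ∀ y ∈ b, x < y) ∧
                Set.image2 (fun x y => t x y) a b = {(τ, α', β')}

lemma ord_succ_lt {κ : Cardinal.{0}} (hκ : ℵ₀ ≤ κ) {β : Ordinal} (hβ : β < κ.ord) :
    β + 1 < κ.ord := by
  rw [Ordinal.add_one_eq_succ]
  exact (Cardinal.isSuccLimit_ord hκ).succ_lt hβ

lemma sup_nat_lt {κ : Cardinal.{0}} (hreg : κ.IsRegular) (hunc : ℵ₀ < κ)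
    (u : ℕ → Ordinal) (hu : ∀ n, u n < κ.ord) : (⨆ n, u n) < κ.ord := by
  apply Ordinal.iSup_lt_ord _ hu
  rw [Cardinal.mk_nat, hreg.cof_eq]
  exact hunc

lemma tail_club {κ : Cardinal.{0}} (hκ : ℵ₀ ≤ κ) {η : Ordinal} (hη : η < κ.ord) :
    IsClubIn {γ | η < γ ∧ γ < κ.ord} κ.ord := by
  refine ⟨fun γ hγ => hγ.2, ?_, ?_⟩
  · rintro α hα ⟨h0, hacc⟩
    obtain ⟨γ, hγ, -, hγα⟩ := hacc 0 h0
    exact ⟨hγ.1.trans hγα, hα⟩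
  · intro β hβ
    have h1 : max β η < κ.ord := max_lt hβ hη
    have h2 : max β η < max β η + 1 := by
      rw [Ordinal.add_one_eq_succ]; exact Order.lt_succ _
    exact ⟨max β η + 1, ⟨(le_max_right β η).trans_lt h2, ord_succ_lt hκ h1⟩,
      (le_max_left β η).trans_lt h2⟩

lemma inter_club {κ : Cardinal.{0}} (hreg : κ.IsRegular) (hunc : ℵ₀ < κ)
    {C D : Set Ordinal} (hC : IsClubIn C κ.ord) (hD : IsClubIn D κ.ord) :
    IsClubIn (C ∩ D) κ.ord := by
  obtain ⟨hC1, hC2, hC3⟩ := hC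
  obtain ⟨hD1, hD2, hD3⟩ := hD
  refine ⟨fun γ hγ => hC1 hγ.1, ?_, ?_⟩
  · rintro α hα ⟨h0, hacc⟩
    constructor
    · exact hC2 α hα ⟨h0, fun β hβ => by
        obtain ⟨γ, hγ, h⟩ := hacc β hβ; exact ⟨γ, hγ.1, h⟩⟩
    · exact hD2 α hα ⟨h0, fun β hβ => by
        obtain ⟨γ, hγ, h⟩ := hacc β hβ; exact ⟨γ, hγ.2, h⟩⟩
  · intro β hβ
    classical
    have cC : ∀ x, ∃ y, x < κ.ord → (y ∈ C ∧ x < y) := by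
      intro x
      by_cases h : x < κ.ord
      · obtain ⟨y, hy⟩ := hC3 x h; exact ⟨y, fun _ => ⟨hy.1, hy.2⟩⟩
      · exact ⟨0, fun hx => absurd hx h⟩
    have cD : ∀ x, ∃ y, x < κ.ord → (y ∈ D ∧ x < y) := by
      intro x
      by_cases h : x < κ.ord
      · obtain ⟨y, hy⟩ := hD3 x h; exact ⟨y, fun _ => ⟨hy.1, hy.2⟩⟩
      · exact ⟨0, fun hx => absurd hx h⟩
    choose fC hfC using cC
    choose fD hfD using cD
    set u : ℕ → Ordinal := fun n => Nat.rec (fC β) (fun n p => if n % 2 = 0 then fD p else fC p) n with hu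
    have husucc : ∀ n, u (n + 1) = if n % 2 = 0 then fD (u n) else fC (u n) := fun n => rfl
    have hult : ∀ n, u n < κ.ord ∧ u n < u (n + 1) := by
      intro n
      induction n with
      | zero =>
        have h0 : u 0 ∈ C ∧ β < u 0 := hfC β hβ
        have h0κ : u 0 < κ.ord := hC1 h0.1
        refine ⟨h0κ, ?_⟩
        rw [husucc 0]
        simp only [Nat.zero_mod, if_pos rfl]
        exact (hfD (u 0) h0κ).2
      | succ n ih =>
        have hnκ : u (n+1) < κ.ord := by
          rw [husucc n]
          by_cases h : n % 2 = 0
          · rw [if_pos h]; exact hD1 (hfD (u n) ih.1).1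
          · rw [if_neg h]; exact hC1 (hfC (u n) ih.1).1
        refine ⟨hnκ, ?_⟩
        rw [husucc (n+1)]
        by_cases h : (n+1) % 2 = 0
        · rw [if_pos h]; exact (hfD _ hnκ).2
        · rw [if_neg h]; exact (hfC _ hnκ).2
    have humono : StrictMono u := strictMono_nat_of_lt_succ fun n => (hult n).2
    set δ := ⨆ n, u n with hδ
    have hδκ : δ < κ.ord := sup_nat_lt hreg hunc u fun n => (hult n).1
    have hle : ∀ n, u n ≤ δ := fun n => Ordinal.le_iSup u n
    have hlt : ∀ n, u n < δ := fun n => lt_of_lt_of_le (hult n).2 (hle (n+1))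
    have hex : ∀ x < δ, ∃ n, x < u n := by
      intro x hx
      by_contra hcon
      push_neg at hcon
      exact absurd (Ordinal.iSup_le hcon : δ ≤ x) (not_le.2 hx)
    have hβδ : β < δ := lt_of_lt_of_le (hfC β hβ).2 (hle 0)
    have h0δ : 0 < δ := lt_of_le_of_lt (zero_le (a := β)) hβδ
    have hmemC : ∀ n, u (2 * n + 2) ∈ C := by
      intro n
      rw [husucc (2*n+1), if_neg (by omega)]
      exact (hfC _ (hult (2*n+1)).1).1
    have hmemD : ∀ n, u (2 * n + 1) ∈ D := by
      intro n
      rw [husucc (2*n), if_pos (by omega)]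
      exact (hfD _ (hult (2*n)).1).1
    have haccC : IsAccPt C δ := by
      refine ⟨h0δ, fun x hx => ?_⟩
      obtain ⟨n, hn⟩ := hex x hx
      exact ⟨u (2*n+2), hmemC n, hn.trans_le (humono.monotone (show n ≤ 2*n+2 by omega)), hlt (2*n+2)⟩
    have haccD : IsAccPt D δ := by
      refine ⟨h0δ, fun x hx => ?_⟩
      obtain ⟨n, hn⟩ := hex x hx
      exact ⟨u (2*n+1), hmemD n, hn.trans_le (humono.monotone (show n ≤ 2*n+1 by omega)), hlt (2*n+1)⟩
    exact ⟨δ, ⟨hC2 δ hδκ haccC, hD2 δ hδκ haccD⟩, hβδ⟩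

noncomputable def enum (g : Ordinal.{0} → Ordinal.{0}) : Ordinal.{0} → Ordinal.{0} :=
  Ordinal.lt_wf.fix fun β ih => g (max β (Ordinal.bsup β fun γ h => ih γ h))

lemma enum_eq (g : Ordinal.{0} → Ordinal.{0}) (β : Ordinal.{0}) :
    enum g β = g (max β (Ordinal.bsup β fun γ _ => enum g γ)) := by
  rw [enum, WellFounded.fix_eq]

lemma closure_club {κ : Cardinal.{0}} (hreg : κ.IsRegular) (hunc : ℵ₀ < κ)
    {f : Ordinal → Ordinal} (hf : ∀ γ < κ.ord, f γ < κ.ord) :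
    IsClubIn {β | β < κ.ord ∧ ∀ γ < β, f γ < β} κ.ord := by
  have hκ : ℵ₀ ≤ κ := hunc.le
  refine ⟨fun γ hγ => hγ.1, ?_, ?_⟩
  · rintro α hα ⟨h0, hacc⟩
    refine ⟨hα, fun γ hγ => ?_⟩
    obtain ⟨c, hc, hγc, hcα⟩ := hacc γ hγ
    exact (hc.2 γ hγc).trans hcα
  · intro β hβ
    set h : Ordinal → Ordinal := fun x => max (x + 1) (Ordinal.bsup x (fun γ _ => f γ) + 1)
      with hh
    have hhlt : ∀ x < κ.ord, h x < κ.ord := by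
      intro x hx
      apply max_lt (ord_succ_lt hκ hx)
      apply ord_succ_lt hκ
      exact Cardinal.bsup_lt_ord_of_isRegular hreg (Cardinal.lt_ord.1 hx)
        fun γ hγ => hf γ (hγ.trans hx)
    have hxh : ∀ x, x < h x := fun x =>
      lt_of_lt_of_le (by rw [Ordinal.add_one_eq_succ]; exact Order.lt_succ x) (le_max_left _ _)
    have hfh : ∀ x, ∀ γ < x, f γ < h x := by
      intro x γ hγ
      have : f γ ≤ Ordinal.bsup x (fun γ _ => f γ) := Ordinal.le_bsup _ γ hγ
      refine lt_of_le_of_lt this (lt_of_lt_of_le ?_ (le_max_right _ _))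
      rw [Ordinal.add_one_eq_succ]; exact Order.lt_succ _
    set u : ℕ → Ordinal := fun n => Nat.rec (β + 1) (fun _ p => h p) n with hu
    have husucc : ∀ n, u (n + 1) = h (u n) := fun n => rfl
    have hult : ∀ n, u n < κ.ord := by
      intro n
      induction n with
      | zero => exact ord_succ_lt hκ hβ
      | succ n ih => rw [husucc]; exact hhlt _ ih
    have humono : StrictMono u := strictMono_nat_of_lt_succ fun n => by
      rw [husucc]; exact hxh _
    set δ := ⨆ n, u n with hδ
    have hδκ : δ < κ.ord := sup_nat_lt hreg hunc u hult
    have hle : ∀ n, u n ≤ δ := fun n => Ordinal.le_iSup u n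
    have hex : ∀ x < δ, ∃ n, x < u n := by
      intro x hx
      by_contra hcon
      push_neg at hcon
      exact absurd (Ordinal.iSup_le hcon : δ ≤ x) (not_le.2 hx)
    refine ⟨δ, ⟨hδκ, fun γ hγ => ?_⟩, ?_⟩
    · obtain ⟨n, hn⟩ := hex γ hγ
      have : f γ < u (n + 1) := by rw [husucc]; exact hfh (u n) γ hn
      exact this.trans_le (hle (n + 1))
    · have hu0 : u 0 = β + 1 := rfl
      have : β < u 0 := by
        rw [hu0, Ordinal.add_one_eq_succ]; exact Order.lt_succ β
      exact this.trans_le (hle 0)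

noncomputable def singIso (x : Ordinal.{0}) :
    ↥(Set.Iio (1 : Ordinal.{u})) ≃o ↥({x} : Set Ordinal.{0}) where
  toFun _ := ⟨x, rfl⟩
  invFun _ := ⟨0, Set.mem_Iio.2 zero_lt_one⟩
  left_inv y := Subtype.ext ((Ordinal.lt_one_iff_zero.1 y.2).symm)
  right_inv y := Subtype.ext (Set.mem_singleton_iff.1 y.2).symm
  map_rel_iff' {a b} := by
    have ha := Ordinal.lt_one_iff_zero.1 a.2
    have hb := Ordinal.lt_one_iff_zero.1 b.2
    simp only [Equiv.coe_fn_mk, Subtype.mk_le_mk, le_refl, true_iff]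
    exact le_of_eq (Subtype.ext (ha.trans hb.symm))

/-- The claim within Lemma 2.12: if `Pl₁(κ,1,2)` holds, then there is `s : [κ]² → κ` such that
(1) `α < s(α,β) < β` whenever `α < β < κ` with `β` a limit ordinal, and
(2) for every cofinal `A ⊆ κ`, the image `s``[A]²` is stationary in `κ`. -/
theorem stmt7 (κ : Cardinal) (hreg : κ.IsRegular) (hunc : ℵ₀ < κ)
    (hPl : Pl1 κ 1 2) :
    ∃ s : Ordinal → Ordinal → Ordinal,
      (∀ α β : Ordinal, α < β → β < κ.ord → Order.IsSuccLimit β →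
        α < s α β ∧ s α β < β) ∧
      ∀ A ⊆ Set.Iio κ.ord, (∀ β < κ.ord, ∃ γ ∈ A, β < γ) →
        IsStationaryIn {z : Ordinal | ∃ x ∈ A, ∃ y ∈ A, x < y ∧ s x y = z} κ.ord := by
  classical
  have hκ : ℵ₀ ≤ κ := hunc.le
  obtain ⟨t, ht1, ht2⟩ := hPl
  refine ⟨fun α β => if (t α β).2.2 < β then (t α β).2.2 else α + 1, ?_, ?_⟩
  · intro α β hαβ hβκ hlim
    show α < (if (t α β).2.2 < β then (t α β).2.2 else α + 1) ∧
      (if (t α β).2.2 < β then (t α β).2.2 else α + 1) < β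
    by_cases hc : (t α β).2.2 < β
    · rw [if_pos hc]
      exact ⟨(ht1 α β hαβ hβκ).2.2.1, hc⟩
    · rw [if_neg hc]
      constructor
      · rw [Ordinal.add_one_eq_succ]; exact Order.lt_succ α
      · rw [Ordinal.add_one_eq_succ]; exact hlim.succ_lt hαβ
  · intro A hA hAcof
    -- a strictly increasing injection into A
    set g : Ordinal → Ordinal := fun x =>
      if h : x < κ.ord then (hAcof x h).choose else x + 1 with hg
    have hg1 : ∀ x, x < g x := by
      intro x
      by_cases h : x < κ.ord
      · rw [hg]; simp only [dif_pos h]; exact (hAcof x h).choose_spec.2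
      · rw [hg]; simp only [dif_neg h]
        rw [Ordinal.add_one_eq_succ]; exact Order.lt_succ x
    have hg2 : ∀ x, x < κ.ord → g x ∈ A := by
      intro x h
      rw [hg]; simp only [dif_pos h]; exact (hAcof x h).choose_spec.1
    set f : Ordinal → Ordinal := enum g with hf
    have hfgt : ∀ β, β < f β := by
      intro β
      rw [hf, enum_eq]
      exact lt_of_le_of_lt (le_max_left β _) (hg1 _)
    have hfmono : StrictMono f := by
      intro γ β hγβ
      have h1 : f γ ≤ Ordinal.bsup β (fun γ _ => enum g γ) := Ordinal.le_bsup _ γ hγβ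
      calc f γ ≤ max β (Ordinal.bsup β fun γ _ => enum g γ) := h1.trans (le_max_right _ _)
        _ < g (max β (Ordinal.bsup β fun γ _ => enum g γ)) := hg1 _
        _ = f β := (enum_eq g β).symm
    have hfA : ∀ β, β < κ.ord → f β ∈ A := by
      intro β
      induction β using Ordinal.induction with
      | _ β ih =>
        intro hβ
        rw [hf, enum_eq]
        apply hg2
        apply max_lt hβ
        exact Cardinal.bsup_lt_ord_of_isRegular hreg (Cardinal.lt_ord.1 hβ)
          fun γ hγ => hA (ih γ hγ (hγ.trans hβ))
    have hfκ : ∀ β, β < κ.ord → f β < κ.ord := fun β hβ => hA (hfA β hβ)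
    set A' : Set Ordinal := f '' Set.Iio κ.ord with hA'
    set CF : Set Ordinal := {β | β < κ.ord ∧ ∀ γ < β, f γ < β} with hCF
    have hCFclub : IsClubIn CF κ.ord := closure_club hreg hunc hfκ
    have hdisj : ∀ β' ∈ CF, β' ∉ A' := by
      rintro β' hβ' ⟨δ, hδ, hfδ⟩
      have h1 : δ < β' := hfδ ▸ hfgt δ
      have h2 : f δ < β' := hβ'.2 δ h1
      exact absurd hfδ h2.ne
    set 𝒜 : Set (Set Ordinal) := (fun x : Ordinal => ({x} : Set Ordinal)) '' A' with h𝒜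
    have h𝒜2 : 𝒜.PairwiseDisjoint id := by
      rintro a ⟨x, hx, rfl⟩ b ⟨y, hy, rfl⟩ hne
      simp only [Function.onFun, id_eq]
      exact Set.disjoint_singleton.2 fun h => hne (by rw [h])
    have h𝒜3 : HasSize 𝒜 κ := by
      rw [HasSize, h𝒜, Cardinal.mk_image_eq Set.singleton_injective, hA',
        Cardinal.mk_image_eq hfmono.injective, Ordinal.mk_Iio_ordinal, Cardinal.card_ord]
    obtain ⟨S, hSsub, hSstat, hkey⟩ := ht2 1
      (by rw [Cardinal.ord_ofNat]; exact one_lt_two) 𝒜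
      (by rintro a ⟨x, hx, rfl⟩
          constructor
          · rw [Set.singleton_subset_iff]
            obtain ⟨δ, hδ, rfl⟩ := hx
            exact hfκ δ hδ
          · exact ⟨singIso x⟩)
      h𝒜2 h𝒜3
    have h0κ : (0 : Ordinal) < κ.ord := (Cardinal.isSuccLimit_ord hκ).pos
    obtain ⟨p, hpS, hp0, hpκ⟩ := hSstat _ (tail_club hκ h0κ)
    intro D hD
    obtain ⟨β', hβ'S, hβ'E⟩ := hSstat _
      (inter_club hreg hunc (inter_club hreg hunc hD hCFclub) (tail_club hκ hpκ))
    obtain ⟨⟨hβ'D, hβ'CF⟩, hpβ', hβ'κ⟩ := hβ'E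
    obtain ⟨a, ha, b, hb, hab, himg⟩ := hkey p hpS β' hβ'S hpβ' 0
      (lt_min (by rw [Cardinal.ord_one]; exact zero_lt_one) hp0)
    obtain ⟨x, hxA', rfl⟩ := ha
    obtain ⟨y, hyA', rfl⟩ := hb
    rw [Set.image2_singleton] at himg
    have hty : t x y = (0, p, β') := Set.singleton_eq_singleton_iff.1 himg
    have hxy : x < y := hab x rfl y rfl
    have hyκ : y < κ.ord := by
      obtain ⟨δ, hδ, rfl⟩ := hyA'
      exact hfκ δ hδ
    have hcl := ht1 x y hxy hyκ
    have hβ'y : β' ≤ y := by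
      have := hcl.2.2.2
      rwa [hty] at this
    have hβ'ney : β' ≠ y := by
      intro h
      exact hdisj β' hβ'CF (h ▸ hyA')
    have hβ'lty : β' < y := lt_of_le_of_ne hβ'y hβ'ney
    have hsxy : (if (t x y).2.2 < y then (t x y).2.2 else x + 1) = β' := by
      rw [hty]
      simp only
      rw [if_pos hβ'lty]
    have hxA : x ∈ A := by
      obtain ⟨δ, hδ, rfl⟩ := hxA'
      exact hfA δ hδ
    have hyA : y ∈ A := by
      obtain ⟨δ, hδ, rfl⟩ := hyA'
      exact hfA δ hδ
    exact ⟨β', ⟨x, hxA, y, hyA, hxy, hsxy⟩, hβ'D⟩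

end Paper
end

section
/- Let κ be a regular uncountable cardinal and θ,χ≤κ cardinals. If Pl1(κ,1,χ) holds and κ↛[stat]²_θ holds, then Pr1(κ,κ,θ,χ) holds. -/
namespace Paper

open Cardinal Set

/-- Shelah's principle `Pr₁(κ, κ, θ, χ)`. -/
def Pr1 (κ θ χ : Cardinal) : Prop :=
  ∃ c : Ordinal → Ordinal → Ordinal,
    (∀ α β : Ordinal, α < β → β < κ.ord → c α β < θ.ord) ∧
    ∀ σ : Ordinal, σ < χ.ord →
      ∀ 𝒜 : Set (Set Ordinal),
        (∀ a ∈ 𝒜, a ⊆ Set.Iio κ.ord ∧ Nonempty (↥(Set.Iio σ) ≃o ↥a)) →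
        𝒜.PairwiseDisjoint id →
        HasSize 𝒜 κ →
        ∀ i : Ordinal, i < θ.ord →
          ∃ a ∈ 𝒜, ∃ b ∈ 𝒜, (∀ x ∈ a, ∀ y ∈ b, x < y) ∧
            Set.image2 (fun x y => c x y) a b = {i}

/-- `κ ↛ [stat]²_θ`: there is a coloring `c : [κ]² → θ` attaining every color on every
stationary subset of `κ`. -/
def NegStat (κ θ : Cardinal) : Prop :=
  ∃ c : Ordinal → Ordinal → Ordinal,
    (∀ α β : Ordinal, α < β → β < κ.ord → c α β < θ.ord) ∧
    ∀ X ⊆ Set.Iio κ.ord, IsStationaryIn X κ.ord →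
      ∀ τ < θ.ord, ∃ x ∈ X, ∃ y ∈ X, x < y ∧ c x y = τ

/-- Lemma 2.14(2): if `Pl₁(κ,1,χ)` and `κ ↛ [stat]²_θ` hold, then `Pr₁(κ,κ,θ,χ)` holds. -/
theorem stmt10 (κ θ χ : Cardinal) (hreg : κ.IsRegular) (hunc : ℵ₀ < κ)
    (hθ : θ ≤ κ) (hχ : χ ≤ κ) (hPl : Pl1 κ 1 χ) (hstat : NegStat κ θ) :
    Pr1 κ θ χ := by
  obtain ⟨t, ht1, ht2⟩ := hPl
  obtain ⟨d, hd1, hd2⟩ := hstat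
  refine ⟨fun α β => d (t α β).2.1 (t α β).2.2, ?_, ?_⟩
  · intro α β hαβ hβκ
    obtain ⟨_, h2, h3, h4⟩ := ht1 α β hαβ hβκ
    exact hd1 _ _ (lt_of_le_of_lt h2 h3) (lt_of_le_of_lt h4 hβκ)
  · intro σ hσ 𝒜 h𝒜 hdisj hsize i hi
    obtain ⟨S, hSsub, hSstat, hS⟩ := ht2 σ hσ 𝒜 h𝒜 hdisj hsize
    have hstat' : IsStationaryIn (S \ {0}) κ.ord := by
      intro C hC
      obtain ⟨h1, h2, h3⟩ := hC
      have hclub : IsClubIn (C \ {0}) κ.ord := by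
        refine ⟨fun y hy => h1 hy.1, ?_, ?_⟩
        · intro α hα hacc
          refine ⟨h2 α hα ⟨hacc.1, fun β hβ => ?_⟩, hacc.1.ne'⟩
          obtain ⟨γ, hγ, hg⟩ := hacc.2 β hβ
          exact ⟨γ, hγ.1, hg⟩
        · intro β hβ
          obtain ⟨γ, hγ, hβγ⟩ := h3 β hβ
          exact ⟨γ, ⟨hγ, ((zero_le (a := β)).trans_lt hβγ).ne'⟩, hβγ⟩
      obtain ⟨x, hxS, hxC⟩ := hSstat (C \ {0}) hclub
      exact ⟨x, ⟨hxS, hxC.2⟩, hxC.1⟩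
    obtain ⟨x, hx, y, hy, hxy, hdxy⟩ :=
      hd2 (S \ {0}) (fun z hz => hSsub hz.1) hstat' i hi
    have hxpos : 0 < x := pos_iff_ne_zero.mpr hx.2
    have h0 : (0 : Ordinal) < min (1 : Cardinal).ord x := lt_min (by simp) hxpos
    obtain ⟨a, ha, b, hb, hab, himg⟩ := hS x hx.1 y hy.1 hxy 0 h0
    refine ⟨a, ha, b, hb, hab, ?_⟩
    have hne : (Set.image2 (fun u v => t u v) a b).Nonempty := by
      rw [himg]; exact ⟨_, rfl⟩
    obtain ⟨hane, hbne⟩ := Set.image2_nonempty_iff.mp hne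
    have key : ∀ u ∈ a, ∀ v ∈ b, d (t u v).2.1 (t u v).2.2 = i := by
      intro u hu v hv
      have htuv : t u v ∈ ({((0 : Ordinal), x, y)} : Set _) := by
        rw [← himg]; exact Set.mem_image2_of_mem hu hv
      rw [Set.mem_singleton_iff.mp htuv]
      exact hdxy
    ext z
    simp only [Set.mem_image2, Set.mem_singleton_iff]
    constructor
    · rintro ⟨u, hu, v, hv, rfl⟩; exact key u hu v hv
    · rintro rfl
      obtain ⟨u, hu⟩ := hane
      obtain ⟨v, hv⟩ := hbne
      exact ⟨u, hu, v, hv, key u hu v hv⟩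

end Paper
end

section
/- Let κ be a regular uncountable cardinal and θ≤κ a cardinal. If Pl1(κ) holds, then the following are equivalent: (1) κ↛[κ]²_θ; (2) κ↛[κ;κ]²_θ; (3) Pr1(κ,κ,θ,ω). -/
namespace Paper

open Cardinal Set

/-- `Pl₁(κ)` of Definition 1.1 (the pair version). -/
def Pl1Two (κ : Cardinal) : Prop :=
  ∃ t : Ordinal → Ordinal → Ordinal × Ordinal,
    (∀ α β : Ordinal, α < β → β < κ.ord →
      (t α β).1 ≤ α ∧ α < (t α β).2 ∧ (t α β).2 ≤ β) ∧
    ∀ 𝒜 : Set (Set Ordinal),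
      (∀ a ∈ 𝒜, a.Finite ∧ a ⊆ Set.Iio κ.ord) →
      𝒜.PairwiseDisjoint id →
      HasSize 𝒜 κ →
      ∃ S ⊆ Set.Iio κ.ord, IsStationaryIn S κ.ord ∧
        ∀ a' ∈ S, ∀ b' ∈ S, a' < b' →
          ∃ a ∈ 𝒜, ∃ b ∈ 𝒜, (∀ x ∈ a, ∀ y ∈ b, x < y) ∧
            Set.image2 (fun x y => t x y) a b = {(a', b')}

/-- `κ ↛ [κ]²_θ`: a coloring of `[κ]²` attaining every color on every subset of full size. -/
def NegFull (κ θ : Cardinal) : Prop :=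
  ∃ c : Ordinal → Ordinal → Ordinal,
    (∀ α β : Ordinal, α < β → β < κ.ord → c α β < θ.ord) ∧
    ∀ X ⊆ Set.Iio κ.ord, HasSize X κ →
      ∀ τ < θ.ord, ∃ x ∈ X, ∃ y ∈ X, x < y ∧ c x y = τ

/-- `κ ↛ [κ;κ]²_θ`: the rectangular version. -/
def NegRect (κ θ : Cardinal) : Prop :=
  ∃ c : Ordinal → Ordinal → Ordinal,
    (∀ α β : Ordinal, α < β → β < κ.ord → c α β < θ.ord) ∧
    ∀ X ⊆ Set.Iio κ.ord, HasSize X κ →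
      ∀ Y ⊆ Set.Iio κ.ord, HasSize Y κ →
        ∀ τ < θ.ord, ∃ x ∈ X, ∃ y ∈ Y, x < y ∧ c x y = τ


section Helpers

lemma size_eq_of_unbounded {κ : Cardinal.{0}} (hreg : κ.IsRegular) (S : Set Ordinal.{0})
    (hS : S ⊆ Set.Iio κ.ord) (hub : ∀ β < κ.ord, ∃ γ ∈ S, β < γ) :
    HasSize S κ := by
  have hsmall : Small.{0} ↥S := small_subset hS
  apply le_antisymm
  · calc #↥S ≤ #↥(Set.Iio κ.ord) := Cardinal.mk_le_mk_of_subset hS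
      _ = Cardinal.lift.{1} κ := by rw [Ordinal.mk_Iio_ordinal, Cardinal.card_ord]
  · set f : Shrink ↥S → Ordinal.{0} := fun i => ((equivShrink ↥S).symm i : Ordinal) with hf
    have hlt : ∀ i, f i < κ.ord := fun i => hS ((equivShrink ↥S).symm i).2
    have hlsub : Ordinal.lsub.{0,0} f = κ.ord := by
      apply le_antisymm (Ordinal.lsub_le hlt)
      by_contra hcon
      push_neg at hcon
      obtain ⟨γ, hγS, hγ⟩ := hub _ hcon
      have := Ordinal.lt_lsub f (equivShrink ↥S ⟨γ, hγS⟩)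
      rw [hf] at this
      simp at this
      exact (hγ.trans this).false
    have h1 : κ ≤ #(Shrink ↥S) := by
      have := Ordinal.cof_lsub_le f
      rw [hlsub, hreg.cof_eq] at this
      exact this
    calc Cardinal.lift.{1} κ ≤ Cardinal.lift.{1} #(Shrink ↥S) := Cardinal.lift_le.2 h1
      _ = #↥S := by rw [lift_mk_shrink'.{1,0} ↥S, Cardinal.lift_id']

lemma unbounded_of_size {κ : Cardinal.{0}} (hreg : κ.IsRegular) (X : Set Ordinal.{0})
    (hX : X ⊆ Set.Iio κ.ord) (hsize : HasSize X κ) :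
    ∀ β < κ.ord, ∃ γ ∈ X, β < γ := by
  intro β hβ
  by_contra hcon
  push_neg at hcon
  have hsub : X ⊆ Set.Iio (β + 1) := fun x hx =>
    lt_of_le_of_lt (hcon x hx) (by rw [Ordinal.add_one_eq_succ]; exact Order.lt_succ β)
  have h1 : #X ≤ Cardinal.lift.{1} (β + 1).card := by
    rw [← Ordinal.mk_Iio_ordinal]
    exact Cardinal.mk_le_mk_of_subset hsub
  rw [hsize, Cardinal.lift_le] at h1
  have h2 : β + 1 < κ.ord := by
    have := (Cardinal.isSuccLimit_ord hreg.aleph0_le).succ_lt hβ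
    rwa [Ordinal.add_one_eq_succ]
  exact absurd (Cardinal.lt_ord.mp h2) (not_lt.2 h1)

lemma stationary_unbounded {κ : Cardinal.{0}} (hreg : κ.IsRegular) (S : Set Ordinal.{0})
    (hst : IsStationaryIn S κ.ord) :
    ∀ β < κ.ord, ∃ γ ∈ S, β < γ := by
  intro β hβ
  have hlim := Cardinal.isSuccLimit_ord hreg.aleph0_le
  have hclub : IsClubIn (Set.Ioo β κ.ord) κ.ord := by
    refine ⟨fun x hx => hx.2, fun α hα hacc => ?_, fun β' hβ' => ?_⟩
    · obtain ⟨γ, hγ, _, hγα⟩ := hacc.2 0 hacc.1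
      exact ⟨hγ.1.trans hγα, hα⟩
    · refine ⟨max β β' + 1, ⟨?_, ?_⟩, ?_⟩
      · exact lt_of_le_of_lt (le_max_left β β')
          (by rw [Ordinal.add_one_eq_succ]; exact Order.lt_succ _)
      · rw [Ordinal.add_one_eq_succ]; exact hlim.succ_lt (max_lt hβ hβ')
      · exact lt_of_le_of_lt (le_max_right β β')
          (by rw [Ordinal.add_one_eq_succ]; exact Order.lt_succ _)
  obtain ⟨γ, hγS, hγ⟩ := hst _ hclub
  exact ⟨γ, hγS, hγ.1⟩

lemma finite_of_orderIso {σ : Ordinal.{v}} (hσ : σ < Cardinal.aleph0.ord)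
    (a : Set Ordinal.{0}) (h : Nonempty (↥(Set.Iio σ) ≃o ↥a)) : a.Finite := by
  obtain ⟨e⟩ := h
  rw [← Set.finite_coe_iff]
  have hfin : Finite ↥(Set.Iio σ) := by
    rw [← Cardinal.mk_lt_aleph0_iff, Ordinal.mk_Iio_ordinal, Cardinal.lift_lt_aleph0]
    exact Cardinal.lt_ord.mp hσ
  exact Finite.of_equiv _ e.toEquiv

lemma ord_zero_lt_two : (0 : Ordinal) ∈ Set.Iio 2 := by norm_num

lemma ord_one_lt_two : (1 : Ordinal) ∈ Set.Iio 2 := by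
  rw [Set.mem_Iio]
  rw [show (2 : Ordinal) = 1 + 1 by norm_num, Ordinal.add_one_eq_succ]
  exact Order.lt_succ 1

lemma mem_iio_two (z : Ordinal) (hz : z < 2) : z = 0 ∨ z = 1 := by
  rw [show (2 : Ordinal) = 1 + 1 by norm_num, Ordinal.add_one_eq_succ,
    Order.lt_succ_iff] at hz
  rcases lt_or_eq_of_le hz with h | h
  · exact Or.inl (Ordinal.lt_one_iff_zero.mp h)
  · exact Or.inr h

noncomputable def pairIso {x y : Ordinal.{0}} (hxy : x < y) :
    ↥(Set.Iio (2 : Ordinal.{v})) ≃o ↥({x, y} : Set Ordinal.{0}) :=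
  { toFun := fun z => if (z : Ordinal) = 0 then ⟨x, Or.inl rfl⟩ else ⟨y, Or.inr rfl⟩
    invFun := fun w => if (w : Ordinal) = x then ⟨0, ord_zero_lt_two⟩ else ⟨1, ord_one_lt_two⟩
    left_inv := by
      rintro ⟨z, hz⟩
      rcases mem_iio_two z hz with h | h <;>
        simp [h, hxy.ne, hxy.ne', Subtype.ext_iff, one_ne_zero]
    right_inv := by
      rintro ⟨w, hw⟩
      rcases hw with h | h
      · subst h; simp [Subtype.ext_iff]
      · rw [Set.mem_singleton_iff] at h; subst h
        simp [Subtype.ext_iff, hxy.ne', one_ne_zero]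
    map_rel_iff' := by
      rintro ⟨z, hz⟩ ⟨z', hz'⟩
      rcases mem_iio_two z hz with h | h <;> rcases mem_iio_two z' hz' with h' | h' <;>
        subst h <;> subst h' <;>
        simp [Subtype.mk_le_mk, ← Subtype.coe_le_coe, ← Subtype.coe_lt_coe, hxy, hxy.le, hxy.not_ge, zero_le_one,
          (zero_le_one (α := Ordinal)).not_gt, one_ne_zero] }

noncomputable def pairSeq (X Y : Set Ordinal.{0}) (ξ : Ordinal.{0}) : Ordinal × Ordinal :=
  let β := Ordinal.blsub.{0,0} ξ fun η _ => (pairSeq X Y η).2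
  let x := sInf (X ∩ Set.Ioi β)
  (x, sInf (Y ∩ Set.Ioi x))
termination_by ξ
decreasing_by assumption

lemma pairSeq_spec {κ : Cardinal.{0}} (hreg : κ.IsRegular) (X Y : Set Ordinal.{0})
    (hX : ∀ β < κ.ord, ∃ γ ∈ X ∩ Set.Iio κ.ord, β < γ)
    (hY : ∀ β < κ.ord, ∃ γ ∈ Y ∩ Set.Iio κ.ord, β < γ) :
    ∀ ξ < κ.ord, (pairSeq X Y ξ).1 ∈ X ∧ (pairSeq X Y ξ).2 ∈ Y ∧
      (pairSeq X Y ξ).1 < (pairSeq X Y ξ).2 ∧ (pairSeq X Y ξ).2 < κ.ord ∧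
      ∀ η < ξ, (pairSeq X Y η).2 < (pairSeq X Y ξ).1 := by
  intro ξ
  induction ξ using Ordinal.induction with
  | h ξ IH =>
    intro hξ
    set β := Ordinal.blsub.{0,0} ξ fun η _ => (pairSeq X Y η).2 with hβ
    have hβκ : β < κ.ord := by
      apply Ordinal.blsub_lt_ord
      · rw [hreg.cof_eq]; exact Cardinal.lt_ord.mp hξ
      · exact fun η hη => (IH η hη (hη.trans hξ)).2.2.2.1
    obtain ⟨x₀, hx₀, hx₀β⟩ := hX β hβκ
    have hXne : (X ∩ Set.Ioi β).Nonempty := ⟨x₀, hx₀.1, hx₀β⟩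
    set x := sInf (X ∩ Set.Ioi β) with hx
    have hxmem : x ∈ X ∩ Set.Ioi β := csInf_mem hXne
    have hxκ : x < κ.ord := by
      have := csInf_le' (show x₀ ∈ X ∩ Set.Ioi β from ⟨hx₀.1, hx₀β⟩)
      exact lt_of_le_of_lt this hx₀.2
    obtain ⟨y₀, hy₀, hy₀x⟩ := hY x hxκ
    have hYne : (Y ∩ Set.Ioi x).Nonempty := ⟨y₀, hy₀.1, hy₀x⟩
    set y := sInf (Y ∩ Set.Ioi x) with hy
    have hymem : y ∈ Y ∩ Set.Ioi x := csInf_mem hYne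
    have hyκ : y < κ.ord :=
      lt_of_le_of_lt (csInf_le' (show y₀ ∈ Y ∩ Set.Ioi x from ⟨hy₀.1, hy₀x⟩)) hy₀.2
    have heq : pairSeq X Y ξ = (x, y) := by
      rw [pairSeq]
    rw [heq]
    refine ⟨hxmem.1, hymem.1, hymem.2, hyκ, fun η hη => ?_⟩
    exact lt_trans (Ordinal.lt_blsub _ η hη) hxmem.2

universe v

lemma aux_full_to_pr1 {κ θ : Cardinal.{0}} (hreg : κ.IsRegular) (hPl : Pl1Two κ) :
    NegFull κ θ → Pr1.{0,v} κ θ Cardinal.aleph0.{v} := by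
  rintro ⟨c, hcb, hc⟩
  obtain ⟨t, ht1, ht2⟩ := hPl
  refine ⟨fun α β => c (t α β).1 (t α β).2, ?_, ?_⟩
  · intro α β hαβ hβ
    obtain ⟨h1, h2, h3⟩ := ht1 α β hαβ hβ
    exact hcb _ _ (h1.trans_lt h2) (h3.trans_lt hβ)
  · intro σ hσ 𝒜 h𝒜 hdisj hsize i hi
    obtain ⟨S, hSsub, hSstat, hSkey⟩ :=
      ht2 𝒜 (fun a ha => ⟨finite_of_orderIso hσ a (h𝒜 a ha).2, (h𝒜 a ha).1⟩) hdisj hsize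
    have hSsize : HasSize S κ :=
      size_eq_of_unbounded hreg S hSsub (stationary_unbounded hreg S hSstat)
    obtain ⟨x, hxS, y, hyS, hxy, hcxy⟩ := hc S hSsub hSsize i hi
    obtain ⟨a, ha, b, hb, hab, himg⟩ := hSkey x hxS y hyS hxy
    refine ⟨a, ha, b, hb, hab, ?_⟩
    have hne : a.Nonempty ∧ b.Nonempty := by
      rw [← Set.image2_nonempty_iff (f := fun u v => t u v), himg]
      exact Set.singleton_nonempty _
    have hconst : ∀ u ∈ a, ∀ v ∈ b, t u v = (x, y) := by
      intro u hu v hv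
      have : t u v ∈ Set.image2 (fun u v => t u v) a b := Set.mem_image2_of_mem hu hv
      rw [himg] at this
      exact this
    ext z
    simp only [Set.mem_image2, Set.mem_singleton_iff]
    constructor
    · rintro ⟨u, hu, v, hv, rfl⟩
      rw [hconst u hu v hv, hcxy]
    · rintro rfl
      obtain ⟨u, hu⟩ := hne.1
      obtain ⟨v, hv⟩ := hne.2
      exact ⟨u, hu, v, hv, by rw [hconst u hu v hv, hcxy]⟩

lemma aux_pr1_to_rect {κ θ : Cardinal.{0}} (hreg : κ.IsRegular) :
    Pr1.{0,v} κ θ Cardinal.aleph0.{v} → NegRect κ θ := by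
  rintro ⟨c, hcb, hc⟩
  refine ⟨c, hcb, ?_⟩
  intro X hX hsX Y hY hsY τ hτ
  have hXub : ∀ β < κ.ord, ∃ γ ∈ X ∩ Set.Iio κ.ord, β < γ := by
    intro β hβ
    obtain ⟨γ, hγ, hβγ⟩ := unbounded_of_size hreg X hX hsX β hβ
    exact ⟨γ, ⟨hγ, hX hγ⟩, hβγ⟩
  have hYub : ∀ β < κ.ord, ∃ γ ∈ Y ∩ Set.Iio κ.ord, β < γ := by
    intro β hβ
    obtain ⟨γ, hγ, hβγ⟩ := unbounded_of_size hreg Y hY hsY β hβ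
    exact ⟨γ, ⟨hγ, hY hγ⟩, hβγ⟩
  have spec := pairSeq_spec hreg X Y hXub hYub
  set g : Ordinal → Set Ordinal :=
    fun ξ => {(pairSeq X Y ξ).1, (pairSeq X Y ξ).2} with hg
  have hlt : ∀ η ξ, η < ξ → ξ < κ.ord → ∀ u ∈ g η, ∀ v ∈ g ξ, u < v := by
    intro η ξ hηξ hξ u hu v hv
    have hη := hηξ.trans hξ
    have h1 : u ≤ (pairSeq X Y η).2 := by
      rcases hu with h | h
      · rw [h]; exact (spec η hη).2.2.1.le
      · rw [Set.mem_singleton_iff] at h; rw [h]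
    have h2 : (pairSeq X Y ξ).1 ≤ v := by
      rcases hv with h | h
      · rw [h]
      · rw [Set.mem_singleton_iff] at h; rw [h]; exact (spec ξ hξ).2.2.1.le
    exact lt_of_le_of_lt h1 (lt_of_lt_of_le ((spec ξ hξ).2.2.2.2 η hηξ) h2)
  have hinj : Set.InjOn g (Set.Iio κ.ord) := by
    intro η hη ξ hξ hgeq
    by_contra hne
    rcases lt_or_gt_of_ne hne with h | h
    · have hx1 : (pairSeq X Y η).1 ∈ g η := Or.inl rfl
      have := hlt η ξ h hξ _ hx1 _ (hgeq ▸ hx1)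
      exact this.false
    · have hx1 : (pairSeq X Y ξ).1 ∈ g ξ := Or.inl rfl
      have := hlt ξ η h hη _ hx1 _ (hgeq.symm ▸ hx1)
      exact this.false
  set 𝒜 : Set (Set Ordinal) := g '' Set.Iio κ.ord with h𝒜def
  have h2lt : (2 : Ordinal) < Cardinal.aleph0.ord := by
    rw [Cardinal.ord_aleph0]
    exact_mod_cast Ordinal.nat_lt_omega0 2
  have hcond : ∀ a ∈ 𝒜, a ⊆ Set.Iio κ.ord ∧ Nonempty (↥(Set.Iio (2 : Ordinal)) ≃o ↥a) := by
    rintro a ⟨ξ, hξ, rfl⟩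
    obtain ⟨hx, hy, hxy, hyκ, -⟩ := spec ξ hξ
    constructor
    · rintro u (h | h)
      · rw [h]; exact hxy.trans hyκ
      · rw [Set.mem_singleton_iff] at h; rw [h]; exact hyκ
    · exact ⟨pairIso hxy⟩
  have hdisj : 𝒜.PairwiseDisjoint id := by
    rintro a ⟨η, hη, rfl⟩ b ⟨ξ, hξ, rfl⟩ hne
    have hηξ : η ≠ ξ := fun h => hne (by rw [h])
    simp only [Function.onFun, id_eq]
    rw [Set.disjoint_left]
    rcases lt_or_gt_of_ne hηξ with h | h
    · intro u hu hu'
      exact (hlt η ξ h hξ u hu u hu').false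
    · intro u hu hu'
      exact (hlt ξ η h hη u hu' u hu).false
  have hsize : HasSize 𝒜 κ := by
    rw [h𝒜def]
    show #↥(g '' Set.Iio κ.ord) = _
    rw [Cardinal.mk_image_eq_of_injOn g _ hinj, Ordinal.mk_Iio_ordinal, Cardinal.card_ord]
  obtain ⟨a, ha, b, hb, hab, himg⟩ := hc 2 h2lt 𝒜 hcond hdisj hsize τ hτ
  obtain ⟨η, hη, rfl⟩ := ha
  obtain ⟨ξ, hξ, rfl⟩ := hb
  refine ⟨(pairSeq X Y η).1, (spec η hη).1, (pairSeq X Y ξ).2, (spec ξ hξ).2.1,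
    hab _ (Or.inl rfl) _ (Or.inr rfl), ?_⟩
  have : c (pairSeq X Y η).1 (pairSeq X Y ξ).2 ∈ Set.image2 (fun x y => c x y) (g η) (g ξ) :=
    Set.mem_image2_of_mem (Or.inl rfl) (Or.inr rfl)
  rw [himg] at this
  exact this

end Helpers

/-- Corollary 2.15 (colorings part): assuming `Pl₁(κ)`, the principles `κ ↛ [κ]²_θ`,
`κ ↛ [κ;κ]²_θ` and `Pr₁(κ,κ,θ,ω)` are equivalent. -/
theorem stmt12 (κ θ : Cardinal) (hreg : κ.IsRegular) (hunc : ℵ₀ < κ) (hθ : θ ≤ κ)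
    (hPl : Pl1Two κ) :
    (NegFull κ θ ↔ NegRect κ θ) ∧ (NegRect κ θ ↔ Pr1 κ θ ℵ₀) := by
  -- NegRect → NegFull
  have hA : NegRect κ θ → NegFull κ θ := by
    rintro ⟨c, hcb, hc⟩
    exact ⟨c, hcb, fun X hX hsX τ hτ => hc X hX hsX X hX hsX τ hτ⟩
  -- NegFull → Pr1 (using Pl1)
  -- Pr1 → NegRect
  exact ⟨⟨fun h => aux_pr1_to_rect.{0} hreg (aux_full_to_pr1.{0} hreg hPl h), hA⟩,
    ⟨fun h => aux_full_to_pr1 hreg hPl (hA h), fun h => aux_pr1_to_rect hreg h⟩⟩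


end Paper
end

section
/- Let κ be a regular uncountable cardinal and n a positive integer, and suppose c:[κ]²→n+1 witnesses Pr1(κ,κ,n+1,ω). Let P be the poset whose elements are the pairs (i,x) with i<n+1 and x a finite subset of κ such that i is not in the image c"[x]², ordered by (i,x)≤(j,y) iff i=j and x⊇y. Then the n-fold product Pⁿ satisfies the κ-cc, while the (n+1)-fold product P^{n+1} does not satisfy the κ-cc. -/
namespace Paper

open Cardinal Set

/-- The `κ`-chain condition for a carrier `P` with ordering `le`:
every set of pairwise incompatible elements has size less than `κ`. -/
def KappaCC (κ : Cardinal.{0}) {P : Type 1} (le : P → P → Prop) : Prop :=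
  ∀ A : Set P,
    (∀ p ∈ A, ∀ q ∈ A, p ≠ q → ¬∃ r, le r p ∧ le r q) →
    #A < Cardinal.lift.{1} κ

/-- The poset of Corollary 2.17: conditions are pairs `(i, x)` with `i < n + 1` and
`x` a finite subset of `κ` such that `i ∉ c``[x]²`. -/
def PosetP (κ : Cardinal) (n : ℕ) (c : Ordinal → Ordinal → ℕ) : Type 1 :=
  {p : ℕ × Set Ordinal // p.1 < n + 1 ∧ p.2.Finite ∧ p.2 ⊆ Set.Iio κ.ord ∧
    ∀ x ∈ p.2, ∀ y ∈ p.2, x < y → c x y ≠ p.1}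

/-- `(i,x) ≤ (j,y)` iff `i = j` and `x ⊇ y`. -/
def PosetLe (κ : Cardinal) (n : ℕ) (c : Ordinal → Ordinal → ℕ) :
    PosetP κ n c → PosetP κ n c → Prop :=
  fun p q => p.val.1 = q.val.1 ∧ q.val.2 ⊆ p.val.2

private lemma lift_regular {κ : Cardinal.{0}} (h : κ.IsRegular) :
    (Cardinal.lift.{1} κ).IsRegular := by
  constructor
  · rw [← Cardinal.lift_aleph0.{1,0}]
    exact Cardinal.lift_le.2 h.1
  · rw [← Cardinal.lift_ord, ← Ordinal.lift_cof]
    exact Cardinal.lift_le.2 h.2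

private lemma nonempty_of_le {α : Type 1} {κ' : Cardinal.{1}} (h0 : κ' ≠ 0) {S : Set α}
    (h : κ' ≤ #S) : S.Nonempty := by
  rcases S.eq_empty_or_nonempty with rfl | hne
  · rw [Cardinal.mk_emptyCollection] at h
    exact absurd (le_zero_iff.1 h) h0
  · exact hne

private lemma pigeon {α β : Type 1} {κ' : Cardinal.{1}} (hreg : κ'.IsRegular)
    {S : Set α} (f : α → β) (hS : κ' ≤ #S) (hsmall : #(f '' S) < κ') :
    ∃ b, κ' ≤ #{a | a ∈ S ∧ f a = b} := by
  by_contra h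
  push_neg at h
  have hsub : S ⊆ ⋃ b : f '' S, {a | a ∈ S ∧ f a = b.val} := fun a ha =>
    Set.mem_iUnion.2 ⟨⟨f a, Set.mem_image_of_mem f ha⟩, ha, rfl⟩
  have h1 : #S ≤ Cardinal.sum fun b : f '' S => #{a | a ∈ S ∧ f a = b.val} :=
    (Cardinal.mk_le_mk_of_subset hsub).trans Cardinal.mk_iUnion_le_sum_mk
  exact absurd (hS.trans h1)
    (not_le.2 (Cardinal.sum_lt_of_isRegular hreg hsmall fun b => h _))

private lemma pigeon' {α β : Type 1} {κ' : Cardinal.{1}} (hreg : κ'.IsRegular)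
    {S : Set α} (f : α → β) (hS : κ' ≤ #S) (hsmall : #(f '' S) < κ') :
    ∃ T ⊆ S, κ' ≤ #T ∧ ∃ b, ∀ a ∈ T, f a = b := by
  obtain ⟨b, hb⟩ := pigeon hreg f hS hsmall
  exact ⟨{a | a ∈ S ∧ f a = b}, fun a ha => ha.1, hb, b, fun a ha => ha.2⟩

private lemma exists_disjoint_subfamily {κ' : Cardinal.{1}} (hreg : κ'.IsRegular)
    (F : Set (Set Ordinal)) (hfin : ∀ a ∈ F, a.Finite) (hF : κ' ≤ #F)
    (hpt : ∀ x : Ordinal, #{a | a ∈ F ∧ x ∈ a} < κ') :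
    ∃ G ⊆ F, κ' ≤ #G ∧ G.Pairwise fun a b => a ∩ b = ∅ := by
  obtain ⟨D, hD⟩ := zorn_subset {D | D ⊆ F ∧ D.Pairwise fun a b => a ∩ b = ∅} (by
    intro c hc hchain
    refine ⟨⋃₀ c, ⟨sUnion_subset fun t ht => (hc ht).1, ?_⟩, fun s hs => subset_sUnion_of_mem hs⟩
    intro a ha b hb hab
    obtain ⟨t1, ht1, ha1⟩ := ha
    obtain ⟨t2, ht2, hb2⟩ := hb
    rcases hchain.total ht1 ht2 with h | h
    · exact (hc ht2).2 (h ha1) hb2 hab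
    · exact (hc ht1).2 ha1 (h hb2) hab)
  by_cases hbig : κ' ≤ #D
  · exact ⟨D, hD.prop.1, hbig, hD.prop.2⟩
  exfalso
  push_neg at hbig
  have hUlt : #(⋃ d : D, (d : Set Ordinal)) < κ' := by
    refine lt_of_le_of_lt Cardinal.mk_iUnion_le_sum_mk ?_
    refine Cardinal.sum_lt_of_isRegular hreg hbig fun d => ?_
    exact lt_of_lt_of_le (hfin _ (hD.prop.1 d.2)).lt_aleph0 hreg.1
  set U : Set Ordinal := ⋃ d : D, (d : Set Ordinal) with hU
  have hcover : F ⊆ D ∪ ⋃ x : U, {a | a ∈ F ∧ (x : Ordinal) ∈ a} := by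
    intro a haF
    by_cases haD : a ∈ D
    · exact Or.inl haD
    have hmeet : ¬ ∀ d ∈ D, a ∩ d = ∅ := by
      intro hall
      apply haD
      have hins : insert a D ∈ {D | D ⊆ F ∧ D.Pairwise fun a b => a ∩ b = ∅} := by
        refine ⟨insert_subset haF hD.prop.1, ?_⟩
        letI : Std.Symm (fun a b : Set Ordinal => a ∩ b = ∅) := ⟨fun u v huv => by
          rw [inter_comm]; exact huv⟩
        refine pairwise_insert_of_symm.2 ⟨hD.prop.2, fun b hb _ => hall b hb⟩
      exact hD.2 hins (subset_insert a D) (mem_insert a D)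
    push_neg at hmeet
    obtain ⟨d, hd, hne⟩ := hmeet
    obtain ⟨x, hx⟩ := hne
    exact Or.inr (mem_iUnion.2 ⟨⟨x, mem_iUnion.2 ⟨⟨d, hd⟩, hx.2⟩⟩, haF, hx.1⟩)
  have h2 : #(⋃ x : U, {a | a ∈ F ∧ (x : Ordinal) ∈ a}) < κ' :=
    Cardinal.mk_iUnion_le_sum_mk.trans_lt
      (Cardinal.sum_lt_of_isRegular hreg hUlt fun x => hpt x)
  exact absurd hF (not_le.2 ((Cardinal.mk_le_mk_of_subset hcover).trans_lt
    ((Cardinal.mk_union_le _ _).trans_lt (Cardinal.add_lt_of_lt hreg.1 hbig h2))))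

private lemma delta_system {κ' : Cardinal.{1}} (hreg : κ'.IsRegular) :
    ∀ (m : ℕ) (F : Set (Set Ordinal)), (∀ a ∈ F, a.Finite ∧ a.ncard ≤ m) → κ' ≤ #F →
      ∃ r : Set Ordinal, r.Finite ∧ ∃ G ⊆ F, κ' ≤ #G ∧ G.Pairwise fun a b => a ∩ b = r := by
  intro m
  induction m with
  | zero =>
    intro F hm hF
    exfalso
    have hsub : F ⊆ {∅} := by
      intro a ha
      have h0 : a = ∅ := (ncard_eq_zero (hm a ha).1).1 (Nat.le_zero.1 (hm a ha).2)
      simp [h0]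
    have h1 : #F ≤ 1 := (Cardinal.mk_le_mk_of_subset hsub).trans (by simp)
    exact absurd (hF.trans h1) (not_le.2 (lt_of_lt_of_le one_lt_aleph0 hreg.1))
  | succ m ih =>
    intro F hm hF
    by_cases hx : ∃ x : Ordinal, κ' ≤ #{a | a ∈ F ∧ x ∈ a}
    · obtain ⟨x, hx⟩ := hx
      set F₀ := {a | a ∈ F ∧ x ∈ a} with hF₀
      have hinj : InjOn (fun a => a \ {x}) F₀ := by
        intro a ha b hb hab
        have h : insert x (a \ {x}) = insert x (b \ {x}) := congrArg (insert x) hab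
        rwa [insert_diff_singleton, insert_diff_singleton,
          insert_eq_self.2 ha.2, insert_eq_self.2 hb.2] at h
      have hF' : κ' ≤ #((fun a => a \ {x}) '' F₀) := by
        rw [Cardinal.mk_image_eq_of_injOn _ _ hinj]; exact hx
      obtain ⟨r', hr', G', hG'sub, hG'card, hG'pair⟩ :=
        ih ((fun a => a \ {x}) '' F₀) (by
          rintro b ⟨a, ha, rfl⟩
          refine ⟨(hm a ha.1).1.diff, ?_⟩
          rw [ncard_diff_singleton_of_mem ha.2]
          have := (hm a ha.1).2
          omega) hF'
      set G := {a | a ∈ F₀ ∧ a \ {x} ∈ G'} with hGdef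
      have himg : (fun a => a \ {x}) '' G = G' := by
        apply Subset.antisymm
        · rintro b ⟨a, ha, rfl⟩; exact ha.2
        · intro b hb
          obtain ⟨a, ha, rfl⟩ := hG'sub hb
          exact ⟨a, ⟨ha, hb⟩, rfl⟩
      refine ⟨insert x r', hr'.insert x, G, fun a ha => ha.1.1, ?_, ?_⟩
      · rw [← himg] at hG'card
        exact hG'card.trans Cardinal.mk_image_le
      · intro a ha b hb hab
        have h1 : a \ {x} ≠ b \ {x} := fun h => hab (hinj ha.1 hb.1 h)
        have h2 := hG'pair ha.2 hb.2 h1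
        have hxa : x ∈ a := ha.1.2
        have hxb : x ∈ b := hb.1.2
        rw [← h2]
        ext y
        simp only [mem_inter_iff, mem_insert_iff, mem_diff, mem_singleton_iff]
        constructor
        · rintro ⟨hya, hyb⟩
          by_cases hyx : y = x
          · exact Or.inl hyx
          · exact Or.inr ⟨⟨hya, hyx⟩, hyb, hyx⟩
        · rintro (rfl | ⟨⟨hya, _⟩, hyb, _⟩)
          · exact ⟨hxa, hxb⟩
          · exact ⟨hya, hyb⟩
    · push_neg at hx
      obtain ⟨G, hsub, hcard, hpair⟩ :=
        exists_disjoint_subfamily hreg F (fun a ha => (hm a ha).1) hF hx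
      exact ⟨∅, finite_empty, G, hsub, hcard, hpair⟩

private lemma orderIso_of_ncard {s : Set Ordinal} (hs : s.Finite) {m : ℕ} (h : s.ncard = m) :
    Nonempty (↥(Set.Iio (m : Ordinal)) ≃o ↥s) := by
  have hcard : hs.toFinset.card = m := by rw [← ncard_eq_toFinset_card s hs, h]
  let e1 : Fin m ≃o ↥hs.toFinset := hs.toFinset.orderIsoOfFin hcard
  let e2 : ↥hs.toFinset ≃o ↥s :=
    { toEquiv := Equiv.subtypeEquivRight fun x => hs.mem_toFinset
      map_rel_iff' := Iff.rfl }
  let f : Fin m → ↥(Set.Iio (m : Ordinal)) :=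
    fun k => ⟨((k : ℕ) : Ordinal), by
      simp only [Set.mem_Iio]
      exact_mod_cast k.2⟩
  have hmono : StrictMono f := by
    intro a b hab
    simp only [f, Subtype.mk_lt_mk]
    exact_mod_cast hab
  have hsurj : Function.Surjective f := by
    rintro ⟨o, ho⟩
    have ho' : o < Ordinal.omega0 := lt_trans ho (Ordinal.nat_lt_omega0 m)
    obtain ⟨k, rfl⟩ := Ordinal.lt_omega0.1 ho'
    have hk : k < m := by
      have hlt := ho
      simp only [Set.mem_Iio] at hlt
      exact_mod_cast hlt
    exact ⟨⟨k, hk⟩, rfl⟩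
  exact ⟨((StrictMono.orderIsoOfSurjective f hmono hsurj).symm.trans e1).trans e2⟩

/-- Corollary 2.17 (main construction): if `c : [κ]² → n + 1` witnesses `Pr₁(κ,κ,n+1,ω)`,
then the `n`-th power of the associated poset is `κ`-cc, while its `(n+1)`-st power is not. -/
theorem stmt14 (κ : Cardinal) (hreg : κ.IsRegular) (hunc : ℵ₀ < κ)
    (n : ℕ) (hn : 0 < n) (c : Ordinal → Ordinal → ℕ)
    (hc : ∀ α β : Ordinal, α < β → β < κ.ord → c α β < n + 1)
    (hwit : ∀ m : ℕ, ∀ 𝒜 : Set (Set Ordinal),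
      (∀ a ∈ 𝒜, a ⊆ Set.Iio κ.ord ∧ Nonempty (↥(Set.Iio (m : Ordinal)) ≃o ↥a)) →
      𝒜.PairwiseDisjoint id →
      HasSize 𝒜 κ →
      ∀ i < n + 1,
        ∃ a ∈ 𝒜, ∃ b ∈ 𝒜, (∀ x ∈ a, ∀ y ∈ b, x < y) ∧
          Set.image2 (fun x y => c x y) a b = {i}) :
    KappaCC κ (fun f g : Fin n → PosetP κ n c => ∀ i, PosetLe κ n c (f i) (g i)) ∧
    ¬ KappaCC κ
      (fun f g : Fin (n + 1) → PosetP κ n c => ∀ i, PosetLe κ n c (f i) (g i)) := by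
  have hreg' : (Cardinal.lift.{1} κ).IsRegular := lift_regular hreg
  have hω' : ℵ₀ < Cardinal.lift.{1} κ := by
    rw [← Cardinal.lift_aleph0.{1,0}]
    exact Cardinal.lift_lt.2 hunc
  have hκ'0 : Cardinal.lift.{1} κ ≠ 0 := (aleph0_pos.trans hω').ne'
  constructor
  · -- the n-th power is κ-cc
    intro A hanti
    by_contra hbig
    push_neg at hbig
    classical
    set κ' := Cardinal.lift.{1} κ with hκ'def
    let usup : (Fin n → PosetP κ n c) → Set Ordinal := fun f => ⋃ i, (f i).val.2
    have husupfin : ∀ f, (usup f).Finite :=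
      fun f => Set.finite_iUnion fun i => (f i).prop.2.1
    have husupsub : ∀ f, usup f ⊆ Set.Iio κ.ord :=
      fun f => Set.iUnion_subset fun i => (f i).prop.2.2.1
    have hsuppsub : ∀ f (i : Fin n), (f i).val.2 ⊆ usup f :=
      fun f i => Set.subset_iUnion (fun i => (f i).val.2) i
    -- Step 1: constant colors
    obtain ⟨A1, hA1A, hA1card, bcol, hbcol⟩ :=
      pigeon' hreg' (fun f => fun i : Fin n => (((f i).val.1 : ℕ) : Ordinal)) hbig (by
        refine lt_of_lt_of_le (Set.Finite.lt_aleph0 ?_) hreg'.1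
        refine Set.Finite.subset
          (Set.Finite.pi fun _ : Fin n => (Set.finite_Iic n).image fun k : ℕ => (k : Ordinal)) ?_
        rintro _ ⟨f, hf, rfl⟩
        simp only [Set.mem_univ_pi]
        intro i
        exact ⟨(f i).val.1, Nat.lt_succ_iff.1 (f i).prop.1, rfl⟩)
    have hcoleq : ∀ f ∈ A1, ∀ g ∈ A1, ∀ i : Fin n, (f i).val.1 = (g i).val.1 := by
      intro f hf g hg i
      have h := congrFun ((hbcol f hf).trans (hbcol g hg).symm) i
      exact_mod_cast h
    -- Step 2: constant size of the union of supports
    obtain ⟨A2, hA2A1, hA2card, bsz, hbsz⟩ :=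
      pigeon' hreg' (fun f => (((usup f).ncard : ℕ) : Ordinal)) hA1card (by
        refine lt_of_le_of_lt (Set.Countable.le_aleph0 ?_) hω'
        refine Set.Countable.mono ?_ (Set.countable_range fun k : ℕ => (k : Ordinal))
        rintro _ ⟨f, hf, rfl⟩
        exact ⟨(usup f).ncard, rfl⟩)
    obtain ⟨f₂, hf₂⟩ := nonempty_of_le hκ'0 hA2card
    have hsz : ∀ f ∈ A2, (usup f).ncard = (usup f₂).ncard := by
      intro f hf
      have h := (hbsz f hf).trans (hbsz f₂ hf₂).symm
      exact_mod_cast h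
    -- Step 3: Δ-system on the unions of supports
    have husupcard : κ' ≤ #(usup '' A2) := by
      by_contra hlt
      push_neg at hlt
      obtain ⟨T, hTsub, hTcard, b, hb⟩ := pigeon' hreg' usup hA2card hlt
      have hbfin : b.Finite := by
        obtain ⟨f, hf⟩ := nonempty_of_le hκ'0 hTcard
        rw [← hb f hf]
        exact husupfin f
      have hinj : InjOn (fun f : Fin n → PosetP κ n c => fun i => (f i).val.2) T := by
        intro f hf g hg h
        funext i
        refine Subtype.ext (Prod.ext ?_ ?_)
        · exact hcoleq f (hA2A1 (hTsub hf)) g (hA2A1 (hTsub hg)) i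
        · exact congrFun h i
      refine absurd hTcard (not_le.2 (lt_of_lt_of_le (Set.Finite.lt_aleph0 ?_) hreg'.1))
      refine Set.Finite.of_finite_image ?_ hinj
      refine Set.Finite.subset (Set.Finite.pi fun _ : Fin n => hbfin.finite_subsets) ?_
      rintro _ ⟨f, hf, rfl⟩
      simp only [Set.mem_univ_pi]
      intro i
      exact (hb f hf) ▸ hsuppsub f i
    obtain ⟨r, hrfin, G, hGsub, hGcard, hGpair⟩ :=
      delta_system hreg' (usup f₂).ncard (usup '' A2)
        (by rintro _ ⟨f, hf, rfl⟩; exact ⟨husupfin f, le_of_eq (hsz f hf)⟩) husupcard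
    -- select one condition per member of the Δ-system
    have hselex : ∀ a : ↥G, ∃ f, f ∈ A2 ∧ usup f = a.val := by
      intro a
      obtain ⟨f, hf, he⟩ := hGsub a.2
      exact ⟨f, hf, he⟩
    choose sel hsel1 hsel2 using hselex
    have hselinj : Function.Injective sel := by
      intro a b h
      apply Subtype.ext
      rw [← hsel2 a, ← hsel2 b, h]
    have hA3card : κ' ≤ #(Set.range sel) := by
      rw [Cardinal.mk_range_eq _ hselinj]
      exact hGcard
    have hA3sub : Set.range sel ⊆ A2 := by rintro _ ⟨a, rfl⟩; exact hsel1 a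
    have husupinj : InjOn usup (Set.range sel) := by
      rintro _ ⟨a, rfl⟩ _ ⟨b, rfl⟩ h
      rw [hsel2 a, hsel2 b] at h
      exact congrArg sel (Subtype.ext h)
    have husupG : ∀ f ∈ Set.range sel, usup f ∈ G := by
      rintro _ ⟨a, rfl⟩
      rw [hsel2 a]
      exact a.2
    -- Step 4: constant traces on the root
    obtain ⟨A4, hA4A3, hA4card, btr, hbtr⟩ :=
      pigeon' hreg' (fun f : Fin n → PosetP κ n c => fun i : Fin n => (f i).val.2 ∩ r)
        hA3card (by
        refine lt_of_lt_of_le (Set.Finite.lt_aleph0 ?_) hreg'.1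
        refine Set.Finite.subset (Set.Finite.pi fun _ : Fin n => hrfin.finite_subsets) ?_
        rintro _ ⟨f, hf, rfl⟩
        simp only [Set.mem_univ_pi]
        intro i
        exact inter_subset_right)
    have htr : ∀ f ∈ A4, ∀ i : Fin n, (f i).val.2 ∩ r = btr i :=
      fun f hf i => congrFun (hbtr f hf) i
    -- Step 5: discard the conditions whose support is inside the root
    have hA5card : κ' ≤ #{f | f ∈ A4 ∧ (usup f \ r).Nonempty} := by
      by_contra h5
      push_neg at h5
      have hrest : {f | f ∈ A4 ∧ ¬(usup f \ r).Nonempty}.Finite := by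
        refine Set.Finite.of_finite_image ?_
          (Set.InjOn.mono (fun f hf => hA4A3 hf.1) husupinj)
        refine Set.Finite.subset hrfin.finite_subsets ?_
        rintro _ ⟨f, hf, rfl⟩
        have h := hf.2
        rw [Set.not_nonempty_iff_eq_empty, Set.diff_eq_empty] at h
        exact h
      have hcov : A4 ⊆ {f | f ∈ A4 ∧ (usup f \ r).Nonempty} ∪
          {f | f ∈ A4 ∧ ¬(usup f \ r).Nonempty} := by
        intro f hf
        by_cases h : (usup f \ r).Nonempty
        · exact Or.inl ⟨hf, h⟩
        · exact Or.inr ⟨hf, h⟩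
      exact absurd hA4card (not_le.2 ((Cardinal.mk_le_mk_of_subset hcov).trans_lt
        ((Cardinal.mk_union_le _ _).trans_lt (Cardinal.add_lt_of_lt hreg'.1 h5
          (lt_of_lt_of_le hrest.lt_aleph0 hreg'.1)))))
    -- Step 6: constant size of the part outside the root
    obtain ⟨A6, hA6A5, hA6card, bm, hbm⟩ :=
      pigeon' hreg' (fun f => (((usup f \ r).ncard : ℕ) : Ordinal)) hA5card (by
        refine lt_of_le_of_lt (Set.Countable.le_aleph0 ?_) hω'
        refine Set.Countable.mono ?_ (Set.countable_range fun k : ℕ => (k : Ordinal))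
        rintro _ ⟨f, hf, rfl⟩
        exact ⟨(usup f \ r).ncard, rfl⟩)
    obtain ⟨f₆, hf₆⟩ := nonempty_of_le hκ'0 hA6card
    have hA6A4 : A6 ⊆ A4 := fun f hf => (hA6A5 hf).1
    have hA6A1 : A6 ⊆ A1 := fun f hf => hA2A1 (hA3sub (hA4A3 (hA6A4 hf)))
    have hA6A : A6 ⊆ A := fun f hf => hA1A (hA6A1 hf)
    have hm₁ : ∀ f ∈ A6, (usup f \ r).ncard = (usup f₆ \ r).ncard := by
      intro f hf
      have h := (hbm f hf).trans (hbm f₆ hf₆).symm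
      exact_mod_cast h
    -- the root is contained in every support in play
    have hrsub : ∀ f ∈ A6, r ⊆ usup f := by
      intro f hf
      have hfG : usup f ∈ G := husupG f (hA4A3 (hA6A4 hf))
      have hns : ¬ G ⊆ {usup f} := by
        intro hsubs
        have h1 : #G ≤ 1 := (Cardinal.mk_le_mk_of_subset hsubs).trans (by simp)
        exact absurd (hGcard.trans h1) (not_le.2 (lt_of_lt_of_le one_lt_aleph0 hreg'.1))
      obtain ⟨b, hbG, hbne⟩ := not_subset.1 hns
      have hpair := hGpair hfG hbG fun h => hbne (mem_singleton_iff.2 h.symm)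
      rw [← hpair]
      exact inter_subset_left
    have hdinj : InjOn (fun f => usup f \ r) A6 := by
      intro f hf g hg h
      have h' : usup f \ r = usup g \ r := h
      refine husupinj (hA4A3 (hA6A4 hf)) (hA4A3 (hA6A4 hg)) ?_
      rw [← Set.diff_union_of_subset (hrsub f hf), ← Set.diff_union_of_subset (hrsub g hg), h']
    -- the family for Pr₁
    have h𝒜0card : κ' ≤ #((fun f => usup f \ r) '' A6) := by
      rw [Cardinal.mk_image_eq_of_injOn _ _ hdinj]
      exact hA6card
    obtain ⟨𝒜, h𝒜sub, h𝒜card⟩ := Cardinal.le_mk_iff_exists_subset.1 h𝒜0card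
    have h𝒜elt : ∀ a ∈ 𝒜, ∃ f ∈ A6, usup f \ r = a := by
      intro a ha
      obtain ⟨f, hf, he⟩ := h𝒜sub ha
      exact ⟨f, hf, he⟩
    -- a color avoided by all coordinates
    obtain ⟨istar, histar_mem, histar⟩ :
        ∃ i ∈ Finset.range (n + 1), ∀ k : Fin n, (f₆ k).val.1 ≠ i := by
      by_contra hcon
      push_neg at hcon
      have hsub : Finset.range (n + 1) ⊆
          Finset.image (fun k : Fin n => (f₆ k).val.1) Finset.univ := by
        intro i hi
        obtain ⟨k, hk⟩ := hcon i hi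
        exact Finset.mem_image.2 ⟨k, Finset.mem_univ k, hk⟩
      have h1 := Finset.card_le_card hsub
      have h2 : (Finset.image (fun k : Fin n => (f₆ k).val.1) Finset.univ).card ≤ n := by
        calc (Finset.image (fun k : Fin n => (f₆ k).val.1) Finset.univ).card
            ≤ Finset.univ.card := Finset.card_image_le
          _ = n := by simp
      rw [Finset.card_range] at h1
      omega
    have histar_lt : istar < n + 1 := Finset.mem_range.1 histar_mem
    -- apply the Pr₁ witness
    obtain ⟨a, ha𝒜, b, hb𝒜, hab, himg2⟩ := hwit (usup f₆ \ r).ncard 𝒜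
      (by
        intro a ha
        obtain ⟨f, hf, rfl⟩ := h𝒜elt a ha
        exact ⟨Set.Subset.trans diff_subset (husupsub f),
          orderIso_of_ncard (husupfin f).diff (hm₁ f hf)⟩)
      (by
        intro x hx y hy hne
        obtain ⟨f, hf, rfl⟩ := h𝒜elt x hx
        obtain ⟨g, hg, rfl⟩ := h𝒜elt y hy
        have hneq : usup f ≠ usup g := fun h => hne (by rw [h])
        have hpair := hGpair (husupG f (hA4A3 (hA6A4 hf))) (husupG g (hA4A3 (hA6A4 hg))) hneq
        simp only [Function.onFun, id]
        rw [Set.disjoint_iff_inter_eq_empty]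
        apply Set.eq_empty_iff_forall_notMem.2
        rintro z ⟨⟨hz1, hz1r⟩, hz2, _⟩
        exact hz1r (hpair ▸ (⟨hz1, hz2⟩ : z ∈ usup f ∩ usup g)))
      h𝒜card istar histar_lt
    obtain ⟨f, hf6, hfa⟩ := h𝒜elt a ha𝒜
    obtain ⟨g, hg6, hgb⟩ := h𝒜elt b hb𝒜
    have hane : a.Nonempty := by
      rw [← hfa]
      exact (hA6A5 hf6).2
    have habne : a ≠ b := by
      intro h
      obtain ⟨x, hx⟩ := hane
      exact lt_irrefl x (hab x hx x (h ▸ hx))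
    have hfg : f ≠ g := fun h => habne (by rw [← hfa, ← hgb, h])
    have hcolfg : ∀ i : Fin n, (f i).val.1 = (g i).val.1 :=
      fun i => hcoleq f (hA6A1 hf6) g (hA6A1 hg6) i
    have hcolf6 : ∀ i : Fin n, (f i).val.1 = (f₆ i).val.1 :=
      fun i => hcoleq f (hA6A1 hf6) f₆ (hA6A1 hf₆) i
    -- membership in the outside parts
    have hsidef : ∀ i : Fin n, ∀ x ∈ (f i).val.2, x ∉ (g i).val.2 → x ∈ a := by
      intro i x hx hnx
      rw [← hfa]
      refine ⟨hsuppsub f i hx, fun hr => hnx ?_⟩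
      have hmem : x ∈ (f i).val.2 ∩ r := ⟨hx, hr⟩
      rw [htr f (hA6A4 hf6) i, ← htr g (hA6A4 hg6) i] at hmem
      exact hmem.1
    have hsideg : ∀ i : Fin n, ∀ x ∈ (g i).val.2, x ∉ (f i).val.2 → x ∈ b := by
      intro i x hx hnx
      rw [← hgb]
      refine ⟨hsuppsub g i hx, fun hr => hnx ?_⟩
      have hmem : x ∈ (g i).val.2 ∩ r := ⟨hx, hr⟩
      rw [htr g (hA6A4 hg6) i, ← htr f (hA6A4 hf6) i] at hmem
      exact hmem.1
    -- the coordinatewise unions are conditions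
    have hext : ∀ i : Fin n, ∀ x ∈ (f i).val.2 ∪ (g i).val.2,
        ∀ y ∈ (f i).val.2 ∪ (g i).val.2, x < y → c x y ≠ (f i).val.1 := by
      intro i x hx y hy hxy
      rcases hx with hxf | hxg <;> rcases hy with hyf | hyg
      · exact (f i).prop.2.2.2 x hxf y hyf hxy
      · by_cases hyf' : y ∈ (f i).val.2
        · exact (f i).prop.2.2.2 x hxf y hyf' hxy
        by_cases hxg' : x ∈ (g i).val.2
        · rw [hcolfg i]
          exact (g i).prop.2.2.2 x hxg' y hyg hxy
        have hxa : x ∈ a := hsidef i x hxf hxg'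
        have hyb : y ∈ b := hsideg i y hyg hyf'
        have hcm : c x y ∈ Set.image2 (fun x y => c x y) a b :=
          Set.mem_image2_of_mem hxa hyb
        rw [himg2, Set.mem_singleton_iff] at hcm
        rw [hcm, hcolf6 i]
        exact fun h => histar i h.symm
      · by_cases hxf' : x ∈ (f i).val.2
        · exact (f i).prop.2.2.2 x hxf' y hyf hxy
        by_cases hyg' : y ∈ (g i).val.2
        · rw [hcolfg i]
          exact (g i).prop.2.2.2 x hxg y hyg' hxy
        have hxb : x ∈ b := hsideg i x hxg hxf'
        have hya : y ∈ a := hsidef i y hyf hyg'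
        exact absurd (hab y hya x hxb) (lt_asymm hxy)
      · rw [hcolfg i]
        exact (g i).prop.2.2.2 x hxg y hyg hxy
    let ext : Fin n → PosetP κ n c := fun i =>
      ⟨((f i).val.1, (f i).val.2 ∪ (g i).val.2), (f i).prop.1,
        (f i).prop.2.1.union (g i).prop.2.1,
        union_subset (f i).prop.2.2.1 (g i).prop.2.2.1, hext i⟩
    exact hanti f (hA6A hf6) g (hA6A hg6) hfg
      ⟨ext, fun i => ⟨rfl, subset_union_left⟩,
        fun i => ⟨hcolfg i, subset_union_right⟩⟩
  · -- the (n+1)-st power is not κ-cc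
    intro hcc
    let g : ↥(Set.Iio κ.ord) → (Fin (n + 1) → PosetP κ n c) := fun α i =>
      ⟨(i.val, {α.val}), i.2, finite_singleton _, by simpa using α.2, by
        intro x hx y hy hxy
        rw [mem_singleton_iff] at hx hy
        subst hx; subst hy
        exact absurd hxy (lt_irrefl _)⟩
    have hginj : Function.Injective g := by
      intro α β h
      have h0 := congrArg (fun f => (f 0).val.2) h
      simp only [g] at h0
      exact Subtype.ext (singleton_eq_singleton_iff.1 h0)
    have hanti : ∀ p ∈ Set.range g, ∀ q ∈ Set.range g, p ≠ q →
        ¬∃ r : Fin (n + 1) → PosetP κ n c,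
          (∀ i, PosetLe κ n c (r i) (p i)) ∧ (∀ i, PosetLe κ n c (r i) (q i)) := by
      rintro _ ⟨α, rfl⟩ _ ⟨β, rfl⟩ hne ⟨r, hrp, hrq⟩
      have hαβ : α.val ≠ β.val := fun h => hne (congrArg g (Subtype.ext h))
      rcases lt_or_gt_of_ne hαβ with hlt | hlt
      · set i : Fin (n + 1) := ⟨c α.val β.val, hc _ _ hlt β.2⟩ with hi
        have h1 : (r i).val.1 = c α.val β.val := (hrp i).1
        have hα : α.val ∈ (r i).val.2 := (hrp i).2 rfl
        have hβ : β.val ∈ (r i).val.2 := (hrq i).2 rfl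
        exact (r i).prop.2.2.2 α.val hα β.val hβ hlt (h1 ▸ rfl)
      · set i : Fin (n + 1) := ⟨c β.val α.val, hc _ _ hlt α.2⟩ with hi
        have h1 : (r i).val.1 = c β.val α.val := (hrp i).1
        have hα : α.val ∈ (r i).val.2 := (hrp i).2 rfl
        have hβ : β.val ∈ (r i).val.2 := (hrq i).2 rfl
        exact (r i).prop.2.2.2 β.val hβ α.val hα hlt (h1 ▸ rfl)
    have hlt := hcc (Set.range g) hanti
    rw [Cardinal.mk_range_eq _ hginj, Ordinal.mk_Iio_ordinal, Cardinal.card_ord] at hlt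
    exact lt_irrefl _ hlt

end Paper
end

section
/- Let κ be a regular uncountable cardinal and χ an infinite regular cardinal with χ⁺⁺<κ. If there exists a stationary subset of E^κ_{≥χ} that is nonreflecting, then there exist an infinite regular cardinal ν with χ≤ν<κ and ν⁺<κ, and a stationary subset Γ⊆E^κ_{≥χ}∩E^κ_{≠ν⁺} that is nonreflecting. -/
namespace Paper

open Cardinal Set

lemma club_inter {δ : Ordinal} (hδ : ℵ₀ < δ.cof) {C₁ C₂ : Set Ordinal}
    (h1 : IsClubIn C₁ δ) (h2 : IsClubIn C₂ δ) : IsClubIn (C₁ ∩ C₂) δ := by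
  refine ⟨fun x hx => h1.1 hx.1, fun α hα hacc => ?_, fun β hβ => ?_⟩
  · refine ⟨h1.2.1 α hα ⟨hacc.1, fun b hb => ?_⟩, h2.2.1 α hα ⟨hacc.1, fun b hb => ?_⟩⟩
    · obtain ⟨γ, hγ, h⟩ := hacc.2 b hb; exact ⟨γ, hγ.1, h⟩
    · obtain ⟨γ, hγ, h⟩ := hacc.2 b hb; exact ⟨γ, hγ.2, h⟩
  · -- unboundedness
    have e1 : ∀ x < δ, ∃ y, y ∈ C₁ ∧ x < y ∧ y < δ := by
      intro x hx; obtain ⟨y, hy, hxy⟩ := h1.2.2 x hx; exact ⟨y, hy, hxy, h1.1 hy⟩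
    have e2 : ∀ x < δ, ∃ y, y ∈ C₂ ∧ x < y ∧ y < δ := by
      intro x hx; obtain ⟨y, hy, hxy⟩ := h2.2.2 x hx; exact ⟨y, hy, hxy, h2.1 hy⟩
    classical
    let F : ℕ → Ordinal → Ordinal := fun n x =>
      if h : x < δ then (if n % 2 = 0 then (e1 x h).choose else (e2 x h).choose) else 0
    let u : ℕ → Ordinal := fun n => Nat.rec β (fun n ih => F n ih) n
    have hu0 : u 0 = β := rfl
    have hustep : ∀ n, u (n + 1) = F n (u n) := fun n => rfl
    have hF1 : ∀ n, n % 2 = 0 → ∀ hx : u n < δ, u (n+1) = (e1 (u n) hx).choose := by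
      intro n hn hx
      rw [hustep]
      simp only [F]
      rw [dif_pos hx, if_pos hn]
    have hF2 : ∀ n, n % 2 ≠ 0 → ∀ hx : u n < δ, u (n+1) = (e2 (u n) hx).choose := by
      intro n hn hx
      rw [hustep]
      simp only [F]
      rw [dif_pos hx, if_neg hn]
    have key : ∀ n, u n < δ ∧ u n < u (n + 1) ∧
        (n % 2 = 0 → u (n+1) ∈ C₁) ∧ (n % 2 ≠ 0 → u (n+1) ∈ C₂) := by
      intro n
      induction n with
      | zero =>
        have hβδ : u 0 < δ := hβ
        have hval : u 1 = (e1 (u 0) hβδ).choose := hF1 0 rfl hβδ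
        obtain ⟨hm, hlt, _⟩ := (e1 (u 0) hβδ).choose_spec
        exact ⟨hβδ, hval ▸ hlt, fun _ => hval ▸ hm, fun h => absurd rfl h⟩
      | succ n ih =>
        have hnd : u (n+1) < δ := by
          by_cases hpar : n % 2 = 0
          · exact h1.1 (ih.2.2.1 hpar)
          · exact h2.1 (ih.2.2.2 hpar)
        by_cases hpar : (n+1) % 2 = 0
        · have hval : u (n+2) = (e1 (u (n+1)) hnd).choose := hF1 (n+1) hpar hnd
          obtain ⟨hm, hlt2, _⟩ := (e1 (u (n+1)) hnd).choose_spec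
          exact ⟨hnd, hval ▸ hlt2, fun _ => hval ▸ hm, fun h => absurd hpar h⟩
        · have hval : u (n+2) = (e2 (u (n+1)) hnd).choose := hF2 (n+1) hpar hnd
          obtain ⟨hm, hlt2, _⟩ := (e2 (u (n+1)) hnd).choose_spec
          exact ⟨hnd, hval ▸ hlt2, fun h => absurd h hpar, fun _ => hval ▸ hm⟩
    have hmono : StrictMono u := strictMono_nat_of_lt_succ fun n => (key n).2.1
    set α := ⨆ n, u n with hα
    have hαδ : α < δ := by
      exact Ordinal.iSup_lt_ord_lift (f := u) (c := δ) (by simpa using hδ) (fun n => (key n).1)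
    have hultα : ∀ n, u n < α := by
      intro n
      exact lt_of_lt_of_le (key n).2.1 (le_ciSup (Ordinal.bddAbove_range u) (n+1))
    have hlt_iff : ∀ b, b < α → ∃ n, b < u n := fun b hb => by
      rwa [hα, Ordinal.lt_iSup_iff] at hb
    have hacc : IsAccPt (C₁ ∩ C₂) α → α ∈ C₁ ∩ C₂ := fun h =>
      ⟨h1.2.1 α hαδ ⟨h.1, fun b hb => by
          obtain ⟨γ, hγ, h'⟩ := h.2 b hb; exact ⟨γ, hγ.1, h'⟩⟩,
       h2.2.1 α hαδ ⟨h.1, fun b hb => by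
          obtain ⟨γ, hγ, h'⟩ := h.2 b hb; exact ⟨γ, hγ.2, h'⟩⟩⟩
    have hαC1 : α ∈ C₁ := by
      refine h1.2.1 α hαδ ⟨lt_of_le_of_lt zero_le (hultα 0), fun b hb => ?_⟩
      obtain ⟨n, hn⟩ := hlt_iff b hb
      exact ⟨u (2 * n + 2 + 1), (key (2*n+2)).2.2.1 (by omega),
        hn.trans_le (hmono.monotone (show n ≤ 2*n+2+1 by omega)), hultα (2*n+2+1)⟩
    have hαC2 : α ∈ C₂ := by
      refine h2.2.1 α hαδ ⟨lt_of_le_of_lt zero_le (hultα 0), fun b hb => ?_⟩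
      obtain ⟨n, hn⟩ := hlt_iff b hb
      exact ⟨u (2 * n + 1 + 1), (key (2*n+1)).2.2.2 (by omega),
        hn.trans_le (hmono.monotone (show n ≤ 2*n+1+1 by omega)), hultα (2*n+1+1)⟩
    exact ⟨α, ⟨hαC1, hαC2⟩, hultα 0⟩

/-- Lemma 4.1: if `χ⁺⁺ < κ` and `E^κ_{≥χ}` admits a nonreflecting stationary subset, then
there are an infinite regular `ν` with `χ ≤ ν`, `ν < κ`, `ν⁺ < κ`, and a nonreflecting
stationary `Γ ⊆ E^κ_{≥χ} ∩ E^κ_{≠ν⁺}`. -/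
theorem stmt16 (κ χ : Cardinal) (hreg : κ.IsRegular) (hunc : ℵ₀ < κ)
    (hχ : χ.IsRegular) (hχκ : Order.succ (Order.succ χ) < κ)
    (hS : ∃ S ⊆ {α : Ordinal | α < κ.ord ∧ χ ≤ α.cof},
      IsStationaryIn S κ.ord ∧
      ∀ α < κ.ord, ℵ₀ < α.cof → ¬ IsStationaryIn (S ∩ Set.Iio α) α) :
    ∃ ν : Cardinal, ν.IsRegular ∧ χ ≤ ν ∧ ν < κ ∧ Order.succ ν < κ ∧
      ∃ Γ ⊆ {α : Ordinal | α < κ.ord ∧ χ ≤ α.cof ∧ α.cof ≠ Order.succ ν},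
        IsStationaryIn Γ κ.ord ∧
        ∀ α < κ.ord, ℵ₀ < α.cof → ¬ IsStationaryIn (Γ ∩ Set.Iio α) α := by
  obtain ⟨S, hSsub, hSstat, hSnr⟩ := hS
  have hcof : ℵ₀ < κ.ord.cof := by rw [hreg.cof_eq]; exact hunc
  -- nonreflection passes down to subsets
  have hsubnr : ∀ Γ ⊆ S, ∀ α < κ.ord, ℵ₀ < α.cof → ¬ IsStationaryIn (Γ ∩ Set.Iio α) α := by
    intro Γ hΓ α hα hac hstat
    refine hSnr α hα hac fun C hC => ?_
    obtain ⟨x, hx1, hx2⟩ := hstat C hC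
    exact ⟨x, ⟨hΓ hx1.1, hx1.2⟩, hx2⟩
  set Γ₁ : Set Ordinal := {α ∈ S | α.cof ≠ Order.succ χ} with hΓ₁
  set Γ₂ : Set Ordinal := {α ∈ S | α.cof = Order.succ χ} with hΓ₂
  have hdich : IsStationaryIn Γ₁ κ.ord ∨ IsStationaryIn Γ₂ κ.ord := by
    by_contra h
    push_neg at h
    obtain ⟨h1, h2⟩ := h
    simp only [IsStationaryIn, not_forall] at h1 h2
    obtain ⟨C₁, hC₁, hne₁⟩ := h1
    obtain ⟨C₂, hC₂, hne₂⟩ := h2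
    obtain ⟨x, hxS, hxC⟩ := hSstat (C₁ ∩ C₂) (club_inter hcof hC₁ hC₂)
    by_cases hc : x.cof = Order.succ χ
    · exact hne₂ ⟨x, ⟨hxS, hc⟩, hxC.2⟩
    · exact hne₁ ⟨x, ⟨hxS, hc⟩, hxC.1⟩
  have hlt1 : χ < Order.succ χ := Order.lt_succ χ
  have hlt2 : Order.succ χ < Order.succ (Order.succ χ) := Order.lt_succ _
  rcases hdich with hstat | hstat
  · refine ⟨χ, hχ, le_rfl, ?_, ?_, Γ₁, ?_, hstat, hsubnr Γ₁ (fun x hx => hx.1)⟩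
    · exact hlt1.trans (hlt2.trans hχκ)
    · exact hlt2.trans hχκ
    · intro x hx
      obtain ⟨hxκ, hxcof⟩ := hSsub hx.1
      exact ⟨hxκ, hxcof, hx.2⟩
  · refine ⟨Order.succ χ, Cardinal.isRegular_succ hχ.aleph0_le, hlt1.le, hlt2.trans hχκ, hχκ,
      Γ₂, ?_, hstat, hsubnr Γ₂ (fun x hx => hx.1)⟩
    intro x hx
    obtain ⟨hxκ, hxcof⟩ := hSsub hx.1
    exact ⟨hxκ, hxcof, hx.2 ▸ hlt2.ne⟩


end Paper
end

section
/- Let κ be a weakly inaccessible cardinal (an uncountable regular limit cardinal), χ<κ an infinite regular cardinal, and μ=χ⁺. Suppose that every stationary subset of E^κ_{≥χ} reflects, and that there exists a stationary subset T⊆E^κ_{≥χ} that does not reflect at inaccessibles. Then there exist regular cardinals σ¹,σ⁰ with μ<σ¹<σ⁰<κ, and stationary sets S¹,S⁰⊆κ consisting of singular cardinals, such that S¹⊆E^κ_{σ¹} and S¹ does not reflect at inaccessibles, and S⁰⊆E^κ_{σ⁰} and S⁰ does not reflect at inaccessibles. -/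
namespace Paper

open Cardinal Set

/-- An ordinal is (the ordinal of) a weakly inaccessible cardinal:
an uncountable regular limit cardinal. -/
def IsWInaccOrd (α : Ordinal) : Prop :=
  ∃ c : Cardinal, α = c.ord ∧ c.IsRegular ∧ ℵ₀ < c ∧ ∀ d < c, Order.succ d < c

/-- An ordinal is (the ordinal of) a singular cardinal. -/
def IsSingCardOrd (α : Ordinal) : Prop :=
  ∃ c : Cardinal, α = c.ord ∧ ℵ₀ ≤ c ∧ c.ord.cof < c

theorem statIn_mono {S S' : Set Ordinal} {δ : Ordinal} (h : S ⊆ S')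
    (hS : IsStationaryIn S δ) : IsStationaryIn S' δ := fun C hC => by
  obtain ⟨x, hx1, hx2⟩ := hS C hC
  exact ⟨x, h hx1, hx2⟩

theorem isClubIn_Iio {δ : Ordinal} (hδ : Order.IsSuccLimit δ) : IsClubIn (Set.Iio δ) δ :=
  ⟨subset_rfl, fun _ hα _ => hα, fun β hβ => ⟨Order.succ β, hδ.succ_lt hβ, Order.lt_succ β⟩⟩

theorem omega_limit {δ : Ordinal} (hδ : ℵ₀ < δ.cof) (g : ℕ → Ordinal)
    (hlt : ∀ n, g n < δ) (hmono : ∀ n, g n < g (n + 1)) :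
    ∃ α, α < δ ∧ (∀ n, g n < α) ∧ ∀ β < α, ∃ n, β < g n := by
  refine ⟨⨆ n, g n, ?_, ?_, ?_⟩
  · exact Ordinal.iSup_lt_ord_lift (by rw [Cardinal.mk_nat, Cardinal.lift_aleph0]; exact hδ) hlt
  · exact fun n => (hmono n).trans_le (Ordinal.le_iSup g (n + 1))
  · exact fun β hβ => Ordinal.lt_iSup_iff.1 hβ

theorem exists_acc_above {C : Set Ordinal} {δ : Ordinal} (hδ : ℵ₀ < δ.cof)
    (hsub : C ⊆ Set.Iio δ) (hunb : ∀ β < δ, ∃ γ ∈ C, β < γ) {β : Ordinal} (hβ : β < δ) :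
    ∃ α, β < α ∧ α < δ ∧ IsAccPt C α := by
  have H : ∀ x : Ordinal, ∃ γ : Ordinal, x < δ → γ ∈ C ∧ x < γ := by
    intro x
    by_cases hx : x < δ
    · obtain ⟨γ, h1, h2⟩ := hunb x hx; exact ⟨γ, fun _ => ⟨h1, h2⟩⟩
    · exact ⟨0, fun h => absurd h hx⟩
  choose nxt hnxt using H
  let g : ℕ → Ordinal := fun n => Nat.rec (nxt β) (fun _ ih => nxt ih) n
  have hgs : ∀ n, g (n + 1) = nxt (g n) := fun n => rfl
  have hkey : ∀ n, g n < δ ∧ g n ∈ C := by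
    intro n
    induction n with
    | zero =>
      have := hnxt β hβ
      exact ⟨hsub this.1, this.1⟩
    | succ n ih =>
      have := hnxt (g n) ih.1
      rw [hgs]
      exact ⟨hsub this.1, this.1⟩
  have hmono : ∀ n, g n < g (n + 1) := by
    intro n; rw [hgs]; exact (hnxt (g n) (hkey n).1).2
  have hβ0 : β < g 0 := (hnxt β hβ).2
  obtain ⟨α, hαδ, h1, h2⟩ := omega_limit hδ g (fun n => (hkey n).1) hmono
  refine ⟨α, hβ0.trans (h1 0), hαδ, (zero_le (a := β)).trans_lt (hβ0.trans (h1 0)), ?_⟩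
  intro β' hβ'
  obtain ⟨n, hn⟩ := h2 β' hβ'
  exact ⟨g (n + 1), (hkey (n + 1)).2, hn.trans (hmono n), h1 (n + 1)⟩

/-- The set of accumulation points below `δ`. -/
def accIn (C : Set Ordinal) (δ : Ordinal) : Set Ordinal := {α | α < δ ∧ IsAccPt C α}

theorem accIn_isClubIn {C : Set Ordinal} {δ : Ordinal} (hδ : ℵ₀ < δ.cof)
    (hsub : C ⊆ Set.Iio δ) (hunb : ∀ β < δ, ∃ γ ∈ C, β < γ) : IsClubIn (accIn C δ) δ := by
  refine ⟨fun α hα => hα.1, ?_, ?_⟩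
  · rintro α hα ⟨hpos, hacc⟩
    refine ⟨hα, hpos, fun β hβ => ?_⟩
    obtain ⟨γ, hγ, hβγ, hγα⟩ := hacc β hβ
    obtain ⟨c, hc, hc1, hc2⟩ := hγ.2.2 β hβγ
    exact ⟨c, hc, hc1, hc2.trans hγα⟩
  · intro β hβ
    obtain ⟨α, h1, h2, h3⟩ := exists_acc_above hδ hsub hunb hβ
    exact ⟨α, ⟨h2, h3⟩, h1⟩

theorem accIn_subset {C : Set Ordinal} {δ : Ordinal} (hC : IsClubIn C δ) :
    accIn C δ ⊆ C := fun α hα => hC.2.1 α hα.1 hα.2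

theorem isClubIn_inter {C D : Set Ordinal} {δ : Ordinal} (hδ : ℵ₀ < δ.cof)
    (hC : IsClubIn C δ) (hD : IsClubIn D δ) : IsClubIn (C ∩ D) δ := by
  refine ⟨fun α hα => hC.1 hα.1, ?_, ?_⟩
  · rintro α hα ⟨hpos, hacc⟩
    constructor
    · refine hC.2.1 α hα ⟨hpos, fun β hβ => ?_⟩
      obtain ⟨γ, hγ, h1, h2⟩ := hacc β hβ
      exact ⟨γ, hγ.1, h1, h2⟩
    · refine hD.2.1 α hα ⟨hpos, fun β hβ => ?_⟩
      obtain ⟨γ, hγ, h1, h2⟩ := hacc β hβ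
      exact ⟨γ, hγ.2, h1, h2⟩
  · intro β hβ
    have H : ∀ x : Ordinal, ∃ p : Ordinal × Ordinal,
        x < δ → p.1 ∈ C ∧ x < p.1 ∧ p.2 ∈ D ∧ p.1 < p.2 ∧ p.2 < δ := by
      intro x
      by_cases hx : x < δ
      · obtain ⟨c, hc1, hc2⟩ := hC.2.2 x hx
        obtain ⟨d, hd1, hd2⟩ := hD.2.2 c (hC.1 hc1)
        exact ⟨(c, d), fun _ => ⟨hc1, hc2, hd1, hd2, hD.1 hd1⟩⟩
      · exact ⟨(0, 0), fun h => absurd h hx⟩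
    choose stp hstp using H
    let g : ℕ → Ordinal := fun n => Nat.rec (stp β).2 (fun _ ih => (stp ih).2) n
    have hg0 : g 0 = (stp β).2 := rfl
    have hgs : ∀ n, g (n + 1) = (stp (g n)).2 := fun n => rfl
    have hkey : ∀ n, g n < δ ∧ g n ∈ D := by
      intro n
      induction n with
      | zero =>
        have := hstp β hβ
        exact ⟨this.2.2.2.2, this.2.2.1⟩
      | succ n ih =>
        have := hstp (g n) ih.1
        rw [hgs]
        exact ⟨this.2.2.2.2, this.2.2.1⟩
    have hmono : ∀ n, g n < g (n + 1) := by
      intro n; rw [hgs]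
      have := hstp (g n) (hkey n).1
      exact this.2.1.trans this.2.2.2.1
    obtain ⟨α, hαδ, h1, h2⟩ := omega_limit hδ g (fun n => (hkey n).1) hmono
    have hβα : β < α := by
      have := hstp β hβ
      exact (this.2.1.trans this.2.2.2.1).trans_le (hg0 ▸ (h1 0).le)
    have hpos : 0 < α := (zero_le (a := β)).trans_lt hβα
    have haccC : IsAccPt C α := by
      refine ⟨hpos, fun β' hβ' => ?_⟩
      obtain ⟨n, hn⟩ := h2 β' hβ'
      have hs := hstp (g n) (hkey n).1
      refine ⟨(stp (g n)).1, hs.1, hn.trans hs.2.1, ?_⟩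
      exact (hs.2.2.2.1.trans_le (hgs n ▸ le_refl _)).trans (h1 (n + 1))
    have haccD : IsAccPt D α := by
      refine ⟨hpos, fun β' hβ' => ?_⟩
      obtain ⟨n, hn⟩ := h2 β' hβ'
      exact ⟨g (n + 1), (hkey (n + 1)).2, hn.trans (hmono n), h1 (n + 1)⟩
    exact ⟨α, ⟨hC.2.1 α hαδ haccC, hD.2.1 α hαδ haccD⟩, hβα⟩

theorem statIn_inter_club {S C : Set Ordinal} {δ : Ordinal} (hδ : ℵ₀ < δ.cof)
    (hS : IsStationaryIn S δ) (hC : IsClubIn C δ) : IsStationaryIn (S ∩ C) δ := by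
  intro D hD
  obtain ⟨x, hx, hxCD⟩ := hS (C ∩ D) (isClubIn_inter hδ hC hD)
  exact ⟨x, ⟨hx, hxCD.1⟩, hxCD.2⟩


universe u

theorem isClubIn_diagonal {κ : Cardinal.{u}} (hreg : κ.IsRegular) (hunc : ℵ₀ < κ)
    (C : Ordinal.{u} → Set Ordinal.{u}) (hC : ∀ γ, IsClubIn (C γ) κ.ord) :
    IsClubIn {α | α < κ.ord ∧ ∀ γ < α, α ∈ C γ} κ.ord := by
  have hcof : κ.ord.cof = κ := hreg.cof_eq
  have hδ : ℵ₀ < κ.ord.cof := by rw [hcof]; exact hunc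
  have hδlim : Order.IsSuccLimit κ.ord := Cardinal.isSuccLimit_ord hreg.aleph0_le
  refine ⟨fun α hα => hα.1, ?_, ?_⟩
  · rintro α hα ⟨hpos, hacc⟩
    refine ⟨hα, fun γ hγ => ?_⟩
    refine (hC γ).2.1 α hα ⟨hpos, fun β hβ => ?_⟩
    obtain ⟨d, hd, hd1, hd2⟩ := hacc (max β γ) (max_lt hβ hγ)
    exact ⟨d, hd.2 γ ((le_max_right β γ).trans_lt hd1), (le_max_left β γ).trans_lt hd1, hd2⟩
  · intro β hβ
    have H : ∀ γ x : Ordinal.{u}, ∃ c : Ordinal.{u}, x < κ.ord → c ∈ C γ ∧ x < c ∧ c < κ.ord := by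
      intro γ x
      by_cases hx : x < κ.ord
      · obtain ⟨c, h1, h2⟩ := (hC γ).2.2 x hx
        exact ⟨c, fun _ => ⟨h1, h2, (hC γ).1 h1⟩⟩
      · exact ⟨0, fun h => absurd h hx⟩
    choose nxt hnxt using H
    let θ : Ordinal.{u} → Ordinal.{u} :=
      fun x => max (Order.succ x) (Ordinal.bsup.{u,u} x (fun γ _ => nxt γ x))
    have hθlt : ∀ x < κ.ord, θ x < κ.ord := by
      intro x hx
      apply max_lt (hδlim.succ_lt hx)
      apply Ordinal.bsup_lt_ord (by rw [hcof]; exact Cardinal.lt_ord.1 hx)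
      exact fun γ hγ => (hnxt γ x hx).2.2
    have hθgt : ∀ x, x < θ x := fun x => (Order.lt_succ x).trans_le (le_max_left _ _)
    let g : ℕ → Ordinal.{u} := fun n => Nat.rec (Order.succ β) (fun _ ih => θ ih) n
    have hg0 : g 0 = Order.succ β := rfl
    have hgs : ∀ n, g (n + 1) = θ (g n) := fun n => rfl
    have hkey : ∀ n, g n < κ.ord := by
      intro n
      induction n with
      | zero => exact hδlim.succ_lt hβ
      | succ n ih => rw [hgs]; exact hθlt _ ih
    have hmono : ∀ n, g n < g (n + 1) := fun n => by rw [hgs]; exact hθgt (g n)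
    have hmono' : Monotone g := monotone_nat_of_le_succ (fun n => (hmono n).le)
    obtain ⟨α, hαδ, h1, h2⟩ := omega_limit hδ g hkey hmono
    have hβα : β < α := (Order.lt_succ β).trans_le (hg0 ▸ (h1 0).le)
    have hpos : 0 < α := (zero_le (a := β)).trans_lt hβα
    refine ⟨α, ⟨hαδ, fun γ hγ => ?_⟩, hβα⟩
    obtain ⟨n₀, hn₀⟩ := h2 γ hγ
    refine (hC γ).2.1 α hαδ ⟨hpos, fun β' hβ' => ?_⟩
    obtain ⟨n₁, hn₁⟩ := h2 β' hβ'
    have hγm : γ < g (max n₀ n₁) := hn₀.trans_le (hmono' (le_max_left n₀ n₁))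
    have hβ'm : β' < g (max n₀ n₁) := hn₁.trans_le (hmono' (le_max_right n₀ n₁))
    have hnx := hnxt γ (g (max n₀ n₁)) (hkey (max n₀ n₁))
    refine ⟨nxt γ (g (max n₀ n₁)), hnx.1, hβ'm.trans hnx.2.1, ?_⟩
    have : nxt γ (g (max n₀ n₁)) ≤ g (max n₀ n₁ + 1) := by
      rw [hgs]
      exact le_trans (Ordinal.le_bsup (fun γ _ => nxt γ (g (max n₀ n₁))) γ hγm)
        (le_max_right _ _)
    exact this.trans_lt (h1 (max n₀ n₁ + 1))

theorem fodor {κ : Cardinal.{u}} (hreg : κ.IsRegular) (hunc : ℵ₀ < κ)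
    {S : Set Ordinal.{u}} (hS : IsStationaryIn S κ.ord) (f : Ordinal.{u} → Ordinal.{u})
    (hf : ∀ α ∈ S, f α < α) :
    ∃ γ, IsStationaryIn (S ∩ {α | f α = γ}) κ.ord := by
  by_contra h
  push_neg at h
  have h' : ∀ γ, ∃ C, IsClubIn C κ.ord ∧ (S ∩ {α | f α = γ}) ∩ C = ∅ := by
    intro γ
    have hγ := h γ
    unfold IsStationaryIn at hγ
    push_neg at hγ
    exact hγ
  choose C hC1 hC2 using h'
  obtain ⟨α, hαS, hα⟩ := hS _ (isClubIn_diagonal hreg hunc C hC1)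
  exact Set.eq_empty_iff_forall_notMem.1 (hC2 (f α)) α
    ⟨⟨hαS, rfl⟩, hα.2 (f α) (hf α hαS)⟩

theorem exists_cof_lt {α : Ordinal.{u}} (hα : ℵ₀ < α.cof) {S : Set Ordinal.{u}}
    (hS : IsStationaryIn S α) : ∃ γ ∈ S, γ.cof < α.cof := by
  have hαlim : Order.IsSuccLimit α := Ordinal.aleph0_le_cof.1 hα.le
  obtain ⟨f, hf⟩ := Ordinal.exists_fundamental_sequence α
  have hblsub : Ordinal.blsub.{u,u} α.cof.ord f = α := hf.2.2
  have hRsub : {x | ∃ i, ∃ hi : i < α.cof.ord, f i hi = x} ⊆ Set.Iio α := by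
    rintro x ⟨i, hi, rfl⟩
    exact Set.mem_Iio.2 (hblsub ▸ Ordinal.lt_blsub.{u,u} f i hi)
  have hRunb : ∀ β < α, ∃ γ ∈ {x | ∃ i, ∃ hi : i < α.cof.ord, f i hi = x}, β < γ := by
    intro β hβ
    by_contra hcon
    push_neg at hcon
    have hle : Ordinal.blsub.{u,u} α.cof.ord f ≤ Order.succ β := by
      rw [Ordinal.blsub_le_iff]
      intro i hi
      exact Order.lt_succ_of_le (hcon (f i hi) ⟨i, hi, rfl⟩)
    rw [hblsub] at hle
    exact absurd hle (not_le.2 (hαlim.succ_lt hβ))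
  obtain ⟨γ, hγS, hγκ, hγacc⟩ := hS _ (accIn_isClubIn hα hRsub hRunb)
  refine ⟨γ, hγS, ?_⟩
  have hγα : γ < α := hγκ
  have hex : ∃ i₁, ∃ hi₁ : i₁ < α.cof.ord, γ ≤ f i₁ hi₁ := by
    by_contra hcon
    push_neg at hcon
    have hle : Ordinal.blsub.{u,u} α.cof.ord f ≤ γ := Ordinal.blsub_le_iff.2 hcon
    rw [hblsub] at hle
    exact absurd hle (not_le.2 hγα)
  obtain ⟨i₁, hi₁, hγf⟩ := hex
  have hpos : 0 < γ := hγacc.1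
  have hFlt : ∀ i (hi : i < i₁),
      (if f i (hi.trans hi₁) < γ then f i (hi.trans hi₁) else 0) < γ := by
    intro i hi
    split
    · assumption
    · exact hpos
  have hble : Ordinal.bsup.{u,u} i₁
      (fun i hi => if f i (hi.trans hi₁) < γ then f i (hi.trans hi₁) else 0) ≤ γ :=
    Ordinal.bsup_le_iff.2 fun i hi => (hFlt i hi).le
  have hbge : γ ≤ Ordinal.bsup.{u,u} i₁
      (fun i hi => if f i (hi.trans hi₁) < γ then f i (hi.trans hi₁) else 0) := by
    by_contra hcon
    push_neg at hcon
    obtain ⟨x, ⟨j, hj, rfl⟩, hbx, hxγ⟩ := hγacc.2 _ hcon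
    have hji : j < i₁ := by
      by_contra hji
      push_neg at hji
      rcases lt_or_eq_of_le hji with h' | h'
      · exact absurd (hγf.trans_lt (hf.2.1 hi₁ hj h')) (not_lt.2 hxγ.le)
      · subst h'
        exact absurd hγf (not_le.2 hxγ)
    have heqF : (if f j (hji.trans hi₁) < γ then f j (hji.trans hi₁) else 0) = f j hj :=
      if_pos hxγ
    have hle := Ordinal.le_bsup.{u,u}
      (fun i hi => if f i (hi.trans hi₁) < γ then f i (hi.trans hi₁) else 0) j hji
    rw [heqF] at hle
    exact absurd (hbx.trans_le hle) (lt_irrefl _)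
  have heq : Ordinal.bsup.{u,u} i₁
      (fun i hi => if f i (hi.trans hi₁) < γ then f i (hi.trans hi₁) else 0) = γ :=
    le_antisymm hble hbge
  have hcof : γ.cof ≤ i₁.card := by
    rw [← heq]
    exact Ordinal.cof_bsup_le (fun i hi => (hFlt i hi).trans_le hbge)
  exact hcof.trans_lt (Cardinal.lt_ord.1 hi₁)

/-- The trace: points of uncountable cofinality where `S` reflects. -/
def trIn (S : Set Ordinal) (δ : Ordinal) : Set Ordinal :=
  {α | α < δ ∧ ℵ₀ < α.cof ∧ IsStationaryIn (S ∩ Set.Iio α) α}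

theorem club_Ioi {α : Ordinal.{u}} (hα : Order.IsSuccLimit α) {β : Ordinal.{u}} (hβ : β < α) :
    IsClubIn (Set.Ioi β ∩ Set.Iio α) α := by
  refine ⟨fun x hx => hx.2, ?_, fun b hb => ?_⟩
  · rintro x hx ⟨hpos, hacc⟩
    obtain ⟨γ, hγ, _, h2⟩ := hacc 0 hpos
    exact ⟨hγ.1.trans h2, hx⟩
  · refine ⟨Order.succ (max b β), ⟨?_, hα.succ_lt (max_lt hb hβ)⟩, ?_⟩
    · exact (le_max_right b β).trans_lt (Order.lt_succ _)
    · exact (le_max_left b β).trans_lt (Order.lt_succ _)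

theorem cardClub {κ : Cardinal.{u}} (hunc : ℵ₀ < κ)
    (hlim : ∀ d < κ, Order.succ d < κ) :
    IsClubIn {β : Ordinal.{u} | β < κ.ord ∧ β.card.ord = β} κ.ord := by
  refine ⟨fun β hβ => hβ.1, ?_, ?_⟩
  · rintro α hα ⟨hpos, hacc⟩
    refine ⟨hα, le_antisymm (Cardinal.ord_card_le α) ?_⟩
    by_contra hcon
    push_neg at hcon
    obtain ⟨γ, hγ, h1, h2⟩ := hacc α.card.ord hcon
    have : γ.card.ord ≤ α.card.ord := Cardinal.ord_le_ord.2 (Ordinal.card_le_card h2.le)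
    rw [hγ.2] at this
    exact absurd h1 (not_lt.2 this)
  · intro β hβ
    refine ⟨(Order.succ β.card).ord, ⟨?_, by rw [Cardinal.card_ord]⟩, ?_⟩
    · exact Cardinal.ord_lt_ord.2 (hlim β.card (Cardinal.lt_ord.1 hβ))
    · exact Cardinal.lt_ord.2 (Order.lt_succ β.card)

theorem trIn_stationary {κ χ : Cardinal.{u}} (hreg : κ.IsRegular) (hunc : ℵ₀ < κ)
    (hrefl : ∀ S ⊆ {α : Ordinal.{u} | α < κ.ord ∧ χ ≤ α.cof},
      IsStationaryIn S κ.ord →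
      ∃ α < κ.ord, ℵ₀ < α.cof ∧ IsStationaryIn (S ∩ Set.Iio α) α)
    {S : Set Ordinal.{u}}
    (hSsub : S ⊆ {α | α < κ.ord ∧ χ ≤ α.cof}) (hSst : IsStationaryIn S κ.ord) :
    IsStationaryIn (trIn S κ.ord) κ.ord := by
  intro Cl hCl
  have hδcof : ℵ₀ < κ.ord.cof := by rw [hreg.cof_eq]; exact hunc
  have hA := accIn_isClubIn hδcof hCl.1 hCl.2.2
  have hSA := statIn_inter_club hδcof hSst hA
  obtain ⟨α, hακ, hαcof, hαst⟩ :=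
    hrefl (S ∩ accIn Cl κ.ord) (fun x hx => hSsub hx.1) hSA
  have hαlim : Order.IsSuccLimit α := Ordinal.aleph0_le_cof.1 hαcof.le
  refine ⟨α, ⟨hακ, hαcof, ?_⟩, ?_⟩
  · exact statIn_mono (fun x hx => ⟨hx.1.1, hx.2⟩) hαst
  · apply hCl.2.1 α hακ
    refine ⟨hαlim.pos, fun β hβ => ?_⟩
    obtain ⟨s, hs1, hs2⟩ := hαst (Set.Ioi β ∩ Set.Iio α) (club_Ioi hαlim hβ)
    obtain ⟨c, hc, hc1, hc2⟩ := hs1.1.2.2.2 β hs2.1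
    exact ⟨c, hc, hc1, hc2.trans hs1.2⟩

theorem sub_trIn_not_reflect {S S' : Set Ordinal.{u}} {κ : Cardinal.{u}}
    (hSnr : ∀ α < κ.ord, IsWInaccOrd α → ¬ IsStationaryIn (S ∩ Set.Iio α) α)
    (hsub : S' ⊆ trIn S κ.ord) :
    ∀ α < κ.ord, IsWInaccOrd α → ¬ IsStationaryIn (S' ∩ Set.Iio α) α := by
  intro α hα hinacc hst
  refine hSnr α hα hinacc ?_
  obtain ⟨c, rfl, hcreg, hcunc, -⟩ := hinacc
  have hαcof : ℵ₀ < c.ord.cof := by rw [hcreg.cof_eq]; exact hcunc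
  intro Cl hCl
  have hA := accIn_isClubIn hαcof hCl.1 hCl.2.2
  obtain ⟨x, hx1, hx2⟩ := hst _ hA
  have hxtr := hsub hx1.1
  have hxα : x < c.ord := hx1.2
  have hclub : IsClubIn (Cl ∩ Set.Iio x) x := by
    refine ⟨fun y hy => hy.2, ?_, ?_⟩
    · rintro y hy ⟨hpos, hacc⟩
      refine ⟨hCl.2.1 y (hy.trans hxα) ⟨hpos, fun b hb => ?_⟩, hy⟩
      obtain ⟨z, hz, h1, h2⟩ := hacc b hb
      exact ⟨z, hz.1, h1, h2⟩
    · intro b hb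
      obtain ⟨z, hz, h1, h2⟩ := hx2.2.2 b hb
      exact ⟨z, ⟨hz, h2⟩, h1⟩
  obtain ⟨s, hs1, hs2⟩ := hxtr.2.2 (Cl ∩ Set.Iio x) hclub
  exact ⟨s, ⟨hs1.1, hs2.2.trans hxα⟩, hs2.1⟩

theorem step_s18 {κ χ ρ : Cardinal.{u}} (hreg : κ.IsRegular) (hunc : ℵ₀ < κ)
    (hlim : ∀ d < κ, Order.succ d < κ)
    (hrefl : ∀ S ⊆ {α : Ordinal.{u} | α < κ.ord ∧ χ ≤ α.cof},
      IsStationaryIn S κ.ord →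
      ∃ α < κ.ord, ℵ₀ < α.cof ∧ IsStationaryIn (S ∩ Set.Iio α) α)
    {S : Set Ordinal.{u}}
    (hSsub : S ⊆ {α | α < κ.ord ∧ χ ≤ α.cof})
    (hSst : IsStationaryIn S κ.ord)
    (hScof : ∀ α ∈ S, ρ ≤ α.cof)
    (hSnr : ∀ α < κ.ord, IsWInaccOrd α → ¬ IsStationaryIn (S ∩ Set.Iio α) α) :
    ∃ σ : Cardinal.{u}, ∃ S' : Set Ordinal.{u}, σ.IsRegular ∧ ρ < σ ∧ σ < κ ∧
      S' ⊆ {α | α < κ.ord ∧ α.cof = σ} ∧ IsStationaryIn S' κ.ord ∧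
      (∀ δ ∈ S', IsSingCardOrd δ) ∧
      (∀ α < κ.ord, IsWInaccOrd α → ¬ IsStationaryIn (S' ∩ Set.Iio α) α) := by
  classical
  have hδcof : ℵ₀ < κ.ord.cof := by rw [hreg.cof_eq]; exact hunc
  have hδlim : Order.IsSuccLimit κ.ord := Cardinal.isSuccLimit_ord hreg.aleph0_le
  have hTst := trIn_stationary hreg hunc hrefl hSsub hSst
  have hTcof : ∀ α ∈ trIn S κ.ord, ρ < α.cof := by
    intro α hα
    obtain ⟨γ, hγ, hlt⟩ := exists_cof_lt hα.2.1 hα.2.2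
    exact (hScof γ hγ.1).trans_lt hlt
  have hTni : ∀ α ∈ trIn S κ.ord, ¬ IsWInaccOrd α := fun α hα h => hSnr α hα.1 h hα.2.2
  have hsucc : ∀ α ∈ trIn S κ.ord, ¬ α.cof.ord < α →
      ∃ d : Cardinal.{u}, d.ord < α ∧ (Order.succ d).ord = α := by
    intro α hα h1
    have hαlim : Order.IsSuccLimit α := Ordinal.aleph0_le_cof.1 hα.2.1.le
    have hcle : α.cof.ord ≤ α :=
      (Cardinal.ord_le_ord.2 (Ordinal.cof_le_card α)).trans (Cardinal.ord_card_le α)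
    have heq : α.cof.ord = α := le_antisymm hcle (not_lt.1 h1)
    have hcreg : α.cof.IsRegular := Cardinal.isRegular_cof hαlim
    by_contra hcon
    refine hTni α hα ⟨α.cof, heq.symm, hcreg, hα.2.1, ?_⟩
    intro d hd
    by_contra hds
    push_neg at hds
    have hde : Order.succ d = α.cof := le_antisymm (Order.succ_le_of_lt hd) hds
    exact hcon ⟨d, heq ▸ Cardinal.ord_lt_ord.2 hd, by rw [hde, heq]⟩
  set f : Ordinal.{u} → Ordinal.{u} := fun α =>
    if α.cof.ord < α then α.cof.ord
    else if h2 : ∃ d : Cardinal.{u}, d.ord < α ∧ (Order.succ d).ord = α then (h2.choose).ord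
    else 0 with hf
  have hfreg : ∀ α ∈ trIn S κ.ord, f α < α := by
    intro α hα
    by_cases h1 : α.cof.ord < α
    · simp only [hf]
      rw [if_pos h1]
      exact h1
    · have h2 := hsucc α hα h1
      simp only [hf]
      rw [if_neg h1, dif_pos h2]
      exact h2.choose_spec.1
  obtain ⟨γ₀, hγ₀⟩ := fodor hreg hunc hTst f hfreg
  obtain ⟨α₀, hα₀, -⟩ := hγ₀ (Set.Iio κ.ord) (isClubIn_Iio hδlim)
  have hγ₀κ : γ₀ < κ.ord := by
    have h := (hfreg α₀ hα₀.1).trans hα₀.1.1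
    rwa [show f α₀ = γ₀ from hα₀.2] at h
  have hv : (Order.succ γ₀.card).ord < κ.ord :=
    Cardinal.ord_lt_ord.2 (hlim γ₀.card (Cardinal.lt_ord.1 hγ₀κ))
  have hS'st : IsStationaryIn ((trIn S κ.ord ∩ {α | f α = γ₀}) ∩
      ({β | β < κ.ord ∧ β.card.ord = β} ∩
        (Set.Ioi (Order.succ γ₀.card).ord ∩ Set.Iio κ.ord))) κ.ord :=
    statIn_inter_club hδcof hγ₀
      (isClubIn_inter hδcof (cardClub hunc hlim) (club_Ioi hδlim hv))
  have hcofeq : ∀ α ∈ (trIn S κ.ord ∩ {α | f α = γ₀}) ∩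
      ({β | β < κ.ord ∧ β.card.ord = β} ∩
        (Set.Ioi (Order.succ γ₀.card).ord ∩ Set.Iio κ.ord)), α.cof = γ₀.card := by
    rintro α ⟨⟨hαtr, hαf⟩, hαcard, hαv, hακ⟩
    have hαf' : f α = γ₀ := hαf
    by_cases h1 : α.cof.ord < α
    · have hfα : f α = α.cof.ord := by simp only [hf]; rw [if_pos h1]
      rw [hfα] at hαf'
      rw [← hαf', Cardinal.card_ord]
    · exfalso
      have h2 := hsucc α hαtr h1
      have hfα : f α = (h2.choose).ord := by simp only [hf]; rw [if_neg h1, dif_pos h2]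
      have hd := h2.choose_spec
      have hdeq : h2.choose = γ₀.card := by rw [← hαf', hfα, Cardinal.card_ord]
      have hαeq : α = (Order.succ γ₀.card).ord := by rw [← hdeq]; exact hd.2.symm
      have hαv' : (Order.succ γ₀.card).ord < α := hαv
      rw [hαeq] at hαv'
      exact lt_irrefl _ hαv'
  obtain ⟨α₁, hα₁, -⟩ := hS'st (Set.Iio κ.ord) (isClubIn_Iio hδlim)
  have hα₁cof : α₁.cof = γ₀.card := hcofeq α₁ hα₁
  have hα₁tr : α₁ ∈ trIn S κ.ord := hα₁.1.1
  have hα₁lim : Order.IsSuccLimit α₁ := Ordinal.aleph0_le_cof.1 hα₁tr.2.1.le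
  have hσreg : (γ₀.card).IsRegular := hα₁cof ▸ Cardinal.isRegular_cof hα₁lim
  have hρσ : ρ < γ₀.card := hα₁cof ▸ hTcof α₁ hα₁tr
  have hσκ : γ₀.card < κ := by
    have h := Ordinal.cof_le_card α₁
    rw [hα₁cof] at h
    exact h.trans_lt (Cardinal.lt_ord.1 hα₁tr.1)
  refine ⟨γ₀.card, (trIn S κ.ord ∩ {α | f α = γ₀}) ∩
      ({β | β < κ.ord ∧ β.card.ord = β} ∩
        (Set.Ioi (Order.succ γ₀.card).ord ∩ Set.Iio κ.ord)),
    hσreg, hρσ, hσκ, ?_, hS'st, ?_, ?_⟩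
  · exact fun α hα => ⟨hα.1.1.1, hcofeq α hα⟩
  · rintro δ hδmem
    obtain ⟨⟨hδtr, hδf⟩, hδcard, hδv, hδκ⟩ := hδmem
    refine ⟨δ.card, hδcard.2.symm, ?_, ?_⟩
    · exact (hδtr.2.1.le).trans (Ordinal.cof_le_card δ)
    · rw [hδcard.2, hcofeq δ ⟨⟨hδtr, hδf⟩, hδcard, hδv, hδκ⟩]
      have hσord : (γ₀.card).ord < δ.card.ord := by
        rw [hδcard.2]
        exact lt_trans (Cardinal.ord_lt_ord.2 (Order.lt_succ γ₀.card)) hδv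
      exact Cardinal.ord_lt_ord.1 hσord
  · exact sub_trIn_not_reflect hSnr (fun x hx => hx.1.1)

/-- Lemma 7.1: if `κ` is weakly inaccessible, every stationary subset of `E^κ_{≥χ}` reflects,
and some stationary `T ⊆ E^κ_{≥χ}` does not reflect at inaccessibles, then there are regular
`σ¹, σ⁰` with `μ < σ¹ < σ⁰ < κ` and stationary sets `S¹ ⊆ E^κ_{σ¹}`, `S⁰ ⊆ E^κ_{σ⁰}`
consisting of singular cardinals, neither of which reflects at inaccessibles. -/
theorem stmt18 (κ χ μ : Cardinal) (hreg : κ.IsRegular) (hunc : ℵ₀ < κ)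
    (hlim : ∀ d < κ, Order.succ d < κ)
    (hχ : χ.IsRegular) (hχκ : χ < κ) (hμ : μ = Order.succ χ)
    (hrefl : ∀ S ⊆ {α : Ordinal | α < κ.ord ∧ χ ≤ α.cof},
      IsStationaryIn S κ.ord →
      ∃ α < κ.ord, ℵ₀ < α.cof ∧ IsStationaryIn (S ∩ Set.Iio α) α)
    (hT : ∃ T ⊆ {α : Ordinal | α < κ.ord ∧ χ ≤ α.cof},
      IsStationaryIn T κ.ord ∧
      ∀ α < κ.ord, IsWInaccOrd α → ¬ IsStationaryIn (T ∩ Set.Iio α) α) :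
    ∃ σ1 σ0 : Cardinal, σ1.IsRegular ∧ σ0.IsRegular ∧
      μ < σ1 ∧ σ1 < σ0 ∧ σ0 < κ ∧
      (∃ S1 ⊆ {α : Ordinal | α < κ.ord ∧ α.cof = σ1},
        IsStationaryIn S1 κ.ord ∧ (∀ δ ∈ S1, IsSingCardOrd δ) ∧
        ∀ α < κ.ord, IsWInaccOrd α → ¬ IsStationaryIn (S1 ∩ Set.Iio α) α) ∧
      (∃ S0 ⊆ {α : Ordinal | α < κ.ord ∧ α.cof = σ0},
        IsStationaryIn S0 κ.ord ∧ (∀ δ ∈ S0, IsSingCardOrd δ) ∧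
        ∀ α < κ.ord, IsWInaccOrd α → ¬ IsStationaryIn (S0 ∩ Set.Iio α) α) := by
  obtain ⟨T, hTsub, hTst, hTnr⟩ := hT
  obtain ⟨σa, Sa, hσareg, hχσa, hσaκ, hSasub, hSast, hSasing, hSanr⟩ :=
    step_s18 hreg hunc hlim hrefl hTsub hTst (fun α hα => (hTsub hα).2) hTnr
  have hSasub' : Sa ⊆ {α | α < κ.ord ∧ χ ≤ α.cof} := fun α hα =>
    ⟨(hSasub hα).1, (hSasub hα).2.symm ▸ (hχσa.le)⟩
  obtain ⟨σb, Sb, hσbreg, hσaσb, hσbκ, hSbsub, hSbst, hSbsing, hSbnr⟩ :=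
    step_s18 hreg hunc hlim hrefl hSasub' hSast
      (fun α hα => le_of_eq (hSasub hα).2.symm) hSanr
  have hSbsub' : Sb ⊆ {α | α < κ.ord ∧ χ ≤ α.cof} := fun α hα =>
    ⟨(hSbsub hα).1, (hSbsub hα).2.symm ▸ (hχσa.trans hσaσb).le⟩
  obtain ⟨σc, Sc, hσcreg, hσbσc, hσcκ, hScsub, hScst, hScsing, hScnr⟩ :=
    step_s18 hreg hunc hlim hrefl hSbsub' hSbst
      (fun α hα => le_of_eq (hSbsub hα).2.symm) hSbnr
  have hμσb : μ < σb := by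
    rw [hμ]
    exact lt_of_le_of_lt (Order.succ_le_of_lt hχσa) hσaσb
  exact ⟨σb, σc, hσbreg, hσcreg, hμσb, hσbσc, hσcκ,
    ⟨Sb, hSbsub, hSbst, hSbsing, hSbnr⟩, ⟨Sc, hScsub, hScst, hScsing, hScnr⟩⟩

end Paper
end
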